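/- arXiv:0704.3456 — 3 statements merged into one kernel-verified Lean document; each statement's English description precedes it below -/
import Mathlib

section
/- Let 𝔍 be a hermitian ideal of the bounded operators on ℓ²(ℕ₀), let α = (α_n)_{n≥1} and β = (β_n)_{n≥1} be sequences compactly included in the open unit disk 𝔻 such that 𝒜(α) − 𝒜(β) ∈ 𝔍, and let a = (a_n)_{n≥1} and b = (b_n)_{n≥1} be sequences in the closed unit disk. Then 𝒞(a) − 𝒞(b) ∈ 𝔍 if and only if 𝒰(a,α) − 𝒰(b,β) ∈ 𝔍. -/
/-!
Common setup: ℓ²(ℕ), CMV operators, diagonal operators and the operator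
Möbius transformation ζ̃_A(T) = η_A⁻¹ (T + A)(1 + A†T)⁻¹ η_{A†},
where η_A = (1 − AA†)^{1/2}.
-/

set_option synthInstance.maxHeartbeats 1000000
set_option maxHeartbeats 1000000

noncomputable section
open Filter

/-- The Hilbert space ℓ²(ℕ₀, ℂ). -/
abbrev H2 : Type := lp (fun _ : ℕ => ℂ) 2

/-- Bounded linear operators on ℓ². -/
abbrev B2 : Type := H2 →L[ℂ] H2

/-- Instance no longer found automatically by type class search on ℓ² operators (port fix). -/
instance instCFCRealB2 : ContinuousFunctionalCalculus ℝ B2 IsSelfAdjoint :=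
  IsSelfAdjoint.instContinuousFunctionalCalculus

/-- `η_A = (1 − A A†)^{1/2}` (the adjoint of `A` is `star A`). -/
def eta (A : B2) : B2 := CFC.sqrt (1 - A * star A)

/-- The operator Möbius transformation `ζ̃_A(T) = η_A⁻¹ (T + A)(1 + A†T)⁻¹ η_{A†}`. -/
def zetaTilde (A T : B2) : B2 :=
  Ring.inverse (eta A) * (T + A) * Ring.inverse (1 + star A * T) * eta (star A)

/-- `ρ_n = (1 − |a_n|²)^{1/2}`. -/
def rho (a : ℕ → ℂ) (n : ℕ) : ℝ := Real.sqrt (1 - ‖a n‖ ^ 2)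

/-- `U` is the block-diagonal operator `Θ₁ ⊕ Θ₃ ⊕ Θ₅ ⊕ ⋯` with
`Θ_n = [[−a_n, ρ_n], [ρ_n, conj a_n]]`. -/
def IsCMVodd (a : ℕ → ℂ) (U : B2) : Prop :=
  ∀ (x : H2) (k : ℕ),
    U x (2 * k) = -(a (2 * k + 1)) * x (2 * k) + (rho a (2 * k + 1) : ℂ) * x (2 * k + 1) ∧
    U x (2 * k + 1) =
      (rho a (2 * k + 1) : ℂ) * x (2 * k) + (starRingEnd ℂ) (a (2 * k + 1)) * x (2 * k + 1)

/-- `U` is the block-diagonal operator `(1) ⊕ Θ₂ ⊕ Θ₄ ⊕ ⋯`. -/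
def IsCMVeven (a : ℕ → ℂ) (U : B2) : Prop :=
  (∀ x : H2, U x 0 = x 0) ∧
  ∀ (x : H2) (k : ℕ),
    U x (2 * k + 1) = -(a (2 * k + 2)) * x (2 * k + 1) + (rho a (2 * k + 2) : ℂ) * x (2 * k + 2) ∧
    U x (2 * k + 2) =
      (rho a (2 * k + 2) : ℂ) * x (2 * k + 1) + (starRingEnd ℂ) (a (2 * k + 2)) * x (2 * k + 2)

/-- `A` is the diagonal operator with diagonal sequence `α` (indices from 0). -/
def IsDiagonal (α : ℕ → ℂ) (A : B2) : Prop := ∀ (x : H2) (n : ℕ), A x n = α n * x n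

/-- A sequence is compactly included in the open unit disk. -/
def CompactlyIncluded (α : ℕ → ℂ) : Prop := ∃ r : ℝ, r < 1 ∧ ∀ n, ‖α n‖ ≤ r

/-- A hermitian ideal of the bounded operators: a linear subspace closed under left and
right multiplication by arbitrary bounded operators and under the adjoint operation. -/
def IsHermitianIdeal (J : Set B2) : Prop :=
  (0 : B2) ∈ J ∧ (∀ S T : B2, S ∈ J → T ∈ J → S + T ∈ J) ∧
    (∀ (c : ℂ) (S : B2), S ∈ J → c • S ∈ J) ∧
    (∀ S T : B2, S ∈ J → T * S ∈ J) ∧ (∀ S T : B2, S ∈ J → S * T ∈ J) ∧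
    (∀ S : B2, S ∈ J → star S ∈ J)

/- ### Auxiliary material -/

namespace CMVAux

lemma coord_ext {S T : B2} (h : ∀ (x : H2) (n : ℕ), S x n = T x n) : S = T := by
  ext x : 1
  exact lp.ext (funext fun n => h x n)

lemma hsum2 (f : H2) : Summable (fun n => ‖f n‖ ^ (2:ℝ)) := by
  simpa using (lp.memℓp f).summable (p := 2) (by norm_num)

lemma norm_sq_eq (f : H2) : ‖f‖ ^ (2:ℝ) = ∑' n, ‖f n‖ ^ (2:ℝ) := by
  simpa using lp.norm_rpow_eq_tsum (p := 2) (by norm_num) f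

lemma lp_norm_le_of_coord {M : ℝ} (hM : 0 ≤ M) (y x : H2) (h : ∀ n : ℕ, ‖y n‖ ≤ M * ‖x n‖) :
    ‖y‖ ≤ M * ‖x‖ := by
  refine lp.norm_le_of_tsum_le (p := 2) (by norm_num) (by positivity) ?_
  have key : ∀ n : ℕ, ‖y n‖ ^ (2:ℝ) ≤ M ^ (2:ℝ) * ‖x n‖ ^ (2:ℝ) := fun n => by
    rw [← Real.mul_rpow hM (norm_nonneg _)]
    exact Real.rpow_le_rpow (norm_nonneg _) (h n) (by norm_num)
  have : ∑' n : ℕ, ‖y n‖ ^ (2:ℝ) ≤ M ^ (2:ℝ) * ‖x‖ ^ (2:ℝ) := by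
    calc ∑' n : ℕ, ‖y n‖ ^ (2:ℝ) ≤ ∑' n : ℕ, M ^ (2:ℝ) * ‖x n‖ ^ (2:ℝ) :=
          Summable.tsum_le_tsum key (hsum2 y) ((hsum2 x).mul_left _)
      _ = M ^ (2:ℝ) * ∑' n : ℕ, ‖x n‖ ^ (2:ℝ) := tsum_mul_left
      _ = M ^ (2:ℝ) * ‖x‖ ^ (2:ℝ) := by rw [norm_sq_eq]
  simpa [Real.mul_rpow hM (norm_nonneg x)] using this

lemma opnorm_le_of_coord (T : B2) {M : ℝ} (hM : 0 ≤ M)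
    (h : ∀ (x : H2) (n : ℕ), ‖T x n‖ ≤ M * ‖x n‖) : ‖T‖ ≤ M :=
  T.opNorm_le_bound hM fun x => lp_norm_le_of_coord hM (T x) x (h x)

lemma exists_diag (γ : ℕ → ℂ) (M : ℝ) (hγ : ∀ n, ‖γ n‖ ≤ M) :
    ∃ T : B2, IsDiagonal γ T := by
  have hM : 0 ≤ M := le_trans (norm_nonneg _) (hγ 0)
  have mem : ∀ x : H2, Memℓp (fun n => γ n * x n) 2 := by
    intro x
    apply memℓp_gen
    have : Summable (fun n : ℕ => M ^ (2:ℝ) * ‖x n‖ ^ (2:ℝ)) := (hsum2 x).mul_left _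
    simp only [ENNReal.toReal_ofNat]
    refine this.of_nonneg_of_le (fun n => by positivity) (fun n => ?_)
    rw [← Real.mul_rpow hM (norm_nonneg _)]
    refine Real.rpow_le_rpow (norm_nonneg _) ?_ (by norm_num)
    rw [norm_mul]
    exact mul_le_mul_of_nonneg_right (hγ n) (norm_nonneg _)
  let L : H2 →ₗ[ℂ] H2 :=
    { toFun := fun x => ⟨fun n => γ n * x n, mem x⟩
      map_add' := fun x y => by
        apply lp.ext
        funext n
        simp [mul_add]
        rfl
      map_smul' := fun c x => by
        apply lp.ext
        funext n
        simp [mul_comm, mul_assoc, mul_left_comm] }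
  refine ⟨L.mkContinuous M (fun x => ?_), fun x n => rfl⟩
  exact lp_norm_le_of_coord hM _ x (fun n => by
    show ‖γ n * x n‖ ≤ M * ‖x n‖
    rw [norm_mul]
    exact mul_le_mul_of_nonneg_right (hγ n) (norm_nonneg _))

lemma pair_normSq (a u v : ℂ) (r : ℝ) :
    Complex.normSq (-a*u + r*v) + Complex.normSq (r*u + (starRingEnd ℂ) a * v)
      = (Complex.normSq a + r^2) * (Complex.normSq u + Complex.normSq v) := by
  simp only [Complex.normSq_apply, Complex.add_re, Complex.add_im, Complex.mul_re,
    Complex.mul_im, Complex.neg_re, Complex.neg_im, Complex.conj_re, Complex.conj_im,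
    Complex.ofReal_re, Complex.ofReal_im]
  ring

lemma diag_mul {γ δ : ℕ → ℂ} {S T : B2} (hS : IsDiagonal γ S) (hT : IsDiagonal δ T) :
    IsDiagonal (fun n => γ n * δ n) (S * T) := fun x n => by
  rw [ContinuousLinearMap.mul_apply, hS, hT, mul_assoc]

lemma diag_unique {γ δ : ℕ → ℂ} {S T : B2} (hS : IsDiagonal γ S) (hT : IsDiagonal δ T)
    (h : ∀ n, γ n = δ n) : S = T :=
  coord_ext fun x n => by rw [hS, hT, h]

lemma diag_comm {γ δ : ℕ → ℂ} {S T : B2} (hS : IsDiagonal γ S) (hT : IsDiagonal δ T) :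
    S * T = T * S :=
  diag_unique (diag_mul hS hT) (diag_mul hT hS) fun n => mul_comm _ _

lemma diag_one : IsDiagonal (fun _ => 1) (1 : B2) := fun x n => by simp

lemma diag_sub {γ δ : ℕ → ℂ} {S T : B2} (hS : IsDiagonal γ S) (hT : IsDiagonal δ T) :
    IsDiagonal (fun n => γ n - δ n) (S - T) := fun x n => by
  rw [ContinuousLinearMap.sub_apply]
  have : ((S x - T x : H2) : ∀ _ : ℕ, ℂ) n = S x n - T x n := by
    rw [lp.coeFn_sub]; rfl
  rw [this, hS, hT, sub_mul]

lemma diag_star {γ : ℕ → ℂ} {S T : B2} (hS : IsDiagonal γ S)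
    (hT : IsDiagonal (fun n => (starRingEnd ℂ) (γ n)) T) : star S = T := by
  rw [ContinuousLinearMap.star_eq_adjoint]
  symm
  rw [ContinuousLinearMap.eq_adjoint_iff]
  intro x y
  rw [lp.inner_eq_tsum, lp.inner_eq_tsum]
  refine tsum_congr fun n => ?_
  rw [RCLike.inner_apply, RCLike.inner_apply, hT, hS]
  simp only [map_mul, RingHomCompTriple.comp_apply, RingHom.id_apply, Complex.conj_conj]
  ring

lemma diag_nonneg {γ : ℕ → ℝ} {T : B2} (hγ : ∀ n, 0 ≤ γ n) (hγb : ∀ n, γ n ≤ 1)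
    (hT : IsDiagonal (fun n => (γ n : ℂ)) T) : 0 ≤ T := by
  obtain ⟨S, hS⟩ := exists_diag (fun n => ((Real.sqrt (γ n) : ℝ) : ℂ)) 1 (fun n => by
    rw [Complex.norm_real, Real.norm_eq_abs, abs_of_nonneg (Real.sqrt_nonneg _)]
    exact Real.sqrt_le_one.mpr (hγb n))
  have hstar : star S = S := diag_star hS (by
    convert hS using 2 with n
    exact Complex.conj_ofReal _)
  have hSS : IsDiagonal (fun n => ((Real.sqrt (γ n) : ℝ) : ℂ) * ((Real.sqrt (γ n) : ℝ) : ℂ))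
      (star S * S) := by rw [hstar]; exact diag_mul hS hS
  have : T = star S * S :=
    diag_unique hT hSS (fun n => by rw [← Complex.ofReal_mul, Real.mul_self_sqrt (hγ n)])
  rw [this]
  exact star_mul_self_nonneg S

lemma norm_rpow_two (z : ℂ) : ‖z‖ ^ (2:ℝ) = Complex.normSq z := by
  rw [show (2:ℝ) = ((2:ℕ):ℝ) by norm_num, Real.rpow_natCast,
    Complex.sq_norm]

lemma cmv_pair (a : ℕ → ℂ) (m : ℕ) (ha : ‖a m‖ ≤ 1) (u v : ℂ) :
    ‖-(a m) * u + (rho a m : ℂ) * v‖ ^ (2:ℝ) +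
      ‖(rho a m : ℂ) * u + (starRingEnd ℂ) (a m) * v‖ ^ (2:ℝ)
      = ‖u‖ ^ (2:ℝ) + ‖v‖ ^ (2:ℝ) := by
  simp only [norm_rpow_two]
  rw [pair_normSq]
  have h1 : (0:ℝ) ≤ 1 - ‖a m‖ ^ 2 := by nlinarith [norm_nonneg (a m)]
  have : Complex.normSq (a m) + (rho a m) ^ 2 = 1 := by
    rw [rho, Real.sq_sqrt h1, Complex.normSq_eq_norm_sq]
    ring
  rw [this, one_mul]

lemma summable_comp {f : ℕ → ℝ} (hf : Summable f) (i : ℕ → ℕ) (hi : Function.Injective i) :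
    Summable (fun k => f (i k)) := hf.comp_injective hi

lemma tsum_pair_eq {f g : ℕ → ℝ} (hf : Summable f) (hg : Summable g)
    (h : ∀ k, f (2*k) + f (2*k+1) = g (2*k) + g (2*k+1)) : ∑' n, f n = ∑' n, g n := by
  have h2e : Function.Injective (fun k : ℕ => 2 * k) := fun p q h => by simp only [] at h; omega
  have h2o : Function.Injective (fun k : ℕ => 2 * k + 1) := fun p q h => by
    simp only [] at h; omega
  have hfe := summable_comp hf _ h2e
  have hfo := summable_comp hf _ h2o
  have hge := summable_comp hg _ h2e
  have hgo := summable_comp hg _ h2o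
  calc ∑' n, f n = (∑' k, f (2*k)) + ∑' k, f (2*k+1) := (tsum_even_add_odd hfe hfo).symm
    _ = ∑' k, (f (2*k) + f (2*k+1)) := (Summable.tsum_add hfe hfo).symm
    _ = ∑' k, (g (2*k) + g (2*k+1)) := tsum_congr h
    _ = (∑' k, g (2*k)) + ∑' k, g (2*k+1) := Summable.tsum_add hge hgo
    _ = ∑' n, g n := tsum_even_add_odd hge hgo

lemma tsum_pair_eq' {f g : ℕ → ℝ} (hf : Summable f) (hg : Summable g) (h0 : f 0 = g 0)
    (h : ∀ k, f (2*k+1) + f (2*k+2) = g (2*k+1) + g (2*k+2)) : ∑' n, f n = ∑' n, g n := by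
  have hfs : Summable (fun n => f (n+1)) := summable_comp hf _ (add_left_injective 1)
  have hgs : Summable (fun n => g (n+1)) := summable_comp hg _ (add_left_injective 1)
  rw [Summable.tsum_eq_zero_add hf, Summable.tsum_eq_zero_add hg, h0]
  congr 1
  refine tsum_pair_eq hfs hgs (fun k => ?_)
  have e1 : 2*k+1+1 = 2*k+2 := by omega
  simp only [e1]
  exact h k

lemma cmvodd_norm (a : ℕ → ℂ) (ha : ∀ n, 1 ≤ n → ‖a n‖ ≤ 1) {U : B2} (hU : IsCMVodd a U) :
    ‖U‖ ≤ 1 := by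
  refine U.opNorm_le_bound zero_le_one fun x => ?_
  rw [one_mul]
  refine lp.norm_le_of_tsum_le (p := 2) (by norm_num) (norm_nonneg _) ?_
  simp only [ENNReal.toReal_ofNat]
  have key : ∑' n : ℕ, ‖U x n‖ ^ (2:ℝ) = ∑' n : ℕ, ‖x n‖ ^ (2:ℝ) := by
    refine tsum_pair_eq (hsum2 (U x)) (hsum2 x) (fun k => ?_)
    obtain ⟨h1, h2⟩ := hU x k
    rw [h1, h2, cmv_pair a (2*k+1) (ha _ (by omega))]
  rw [key, ← norm_sq_eq]

lemma cmveven_norm (a : ℕ → ℂ) (ha : ∀ n, 1 ≤ n → ‖a n‖ ≤ 1) {U : B2} (hU : IsCMVeven a U) :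
    ‖U‖ ≤ 1 := by
  obtain ⟨h0, hU⟩ := hU
  refine U.opNorm_le_bound zero_le_one fun x => ?_
  rw [one_mul]
  refine lp.norm_le_of_tsum_le (p := 2) (by norm_num) (norm_nonneg _) ?_
  simp only [ENNReal.toReal_ofNat]
  have key : ∑' n : ℕ, ‖U x n‖ ^ (2:ℝ) = ∑' n : ℕ, ‖x n‖ ^ (2:ℝ) := by
    refine tsum_pair_eq' (hsum2 (U x)) (hsum2 x) (by rw [h0 x]) (fun k => ?_)
    obtain ⟨h1, h2⟩ := hU x k
    rw [h1, h2, cmv_pair a (2*k+2) (ha _ (by omega))]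
  rw [key, ← norm_sq_eq]

lemma ring_inverse_eq {M₀ : Type*} [MonoidWithZero M₀] {X Y : M₀} (h1 : X * Y = 1)
    (h2 : Y * X = 1) : Ring.inverse X = Y := by
  have hu : IsUnit X := ⟨⟨X, Y, h1, h2⟩, rfl⟩
  calc Ring.inverse X = Ring.inverse X * (X * Y) := by rw [h1, mul_one]
    _ = (Ring.inverse X * X) * Y := by rw [mul_assoc]
    _ = Y := by rw [Ring.inverse_mul_cancel _ hu, one_mul]

lemma moebius_backward {R : Type*} [Ring R] (A A' C S V K iK : R)
    (hSV : S * V = 1) (hVS : V * S = 1) (hKiK : K * iK = 1) (hiKK : iK * K = 1)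
    (hK : K = 1 + A' * C) (hS2 : S * S = 1 - A * A') (hS2' : S * S = 1 - A' * A)
    (hAS : A * S = S * A) (hA'S : A' * S = S * A') :
    (1 - A' * (V * (C + A) * iK * S)) * (V * K * V) = 1 ∧
    (V * K * V) * (1 - A' * (V * (C + A) * iK * S)) = 1 ∧
    V * ((V * (C + A) * iK * S) - A) * (V * K * V) * S = C := by
  set Z := V * (C + A) * iK * S with hZ
  have hAV : A * V = V * A := by
    calc A * V = V * S * A * V := by rw [hVS, one_mul]
      _ = V * (S * A) * V := by simp only [mul_assoc]
      _ = V * (A * S) * V := by rw [hAS]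
      _ = V * A * (S * V) := by simp only [mul_assoc]
      _ = V * A := by rw [hSV, mul_one]
  have hA'V : A' * V = V * A' := by
    calc A' * V = V * S * A' * V := by rw [hVS, one_mul]
      _ = V * (S * A') * V := by simp only [mul_assoc]
      _ = V * (A' * S) * V := by rw [hA'S]
      _ = V * A' * (S * V) := by simp only [mul_assoc]
      _ = V * A' := by rw [hSV, mul_one]
  have c1 : ∀ x, S * (V * x) = x := fun x => by rw [← mul_assoc, hSV, one_mul]
  have c2 : ∀ x, V * (S * x) = x := fun x => by rw [← mul_assoc, hVS, one_mul]
  have c3 : ∀ x, K * (iK * x) = x := fun x => by rw [← mul_assoc, hKiK, one_mul]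
  have c4 : ∀ x, iK * (K * x) = x := fun x => by rw [← mul_assoc, hiKK, one_mul]
  have e1 : V * (A * K) * iK * S = A := by
    simp only [mul_assoc, c3]
    rw [hAS, c2]
  have e2 : V * ((C + A) - A * K) * iK * S = Z - A := by
    rw [mul_sub, sub_mul, sub_mul, e1, hZ]
  have hCA : (C + A) - A * K = S * (S * C) := by
    rw [hK]
    have : C + A - A * (1 + A' * C) = (1 - A * A') * C := by noncomm_ring
    rw [this, ← hS2, mul_assoc]
  have key1 : Z - A = S * (C * (iK * S)) := by
    rw [← e2, hCA]
    simp only [mul_assoc, c2]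
  have e3 : A' * Z = V * (A' * (C + A)) * iK * S := by
    rw [hZ]
    simp only [← mul_assoc]
    rw [← hA'V]
  have e4 : V * K * iK * S = 1 := by
    simp only [mul_assoc, c3]
    exact hVS
  have e5 : V * (K - A' * (C + A)) * iK * S = 1 - A' * Z := by
    rw [mul_sub, sub_mul, sub_mul, e3, e4]
  have hK2 : K - A' * (C + A) = S * S := by
    rw [hK]
    have : 1 + A' * C - A' * (C + A) = 1 - A' * A := by noncomm_ring
    rw [this, ← hS2']
  have key2 : 1 - A' * Z = S * (iK * S) := by
    rw [← e5, hK2]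
    simp only [mul_assoc, c2]
  refine ⟨?_, ?_, ?_⟩
  · rw [key2]
    simp only [mul_assoc, c1, c4]
    exact hSV
  · rw [key2]
    simp only [mul_assoc, c2, c3]
    exact hVS
  · rw [key1]
    simp only [mul_assoc, c2, c1, c4, hVS, mul_one]

end CMVAux

set_option maxHeartbeats 4000000

open CMVAux in
/-- if `𝒜(α) − 𝒜(β)` belongs to a hermitian ideal `J`, with `α, β` compactly
included in `𝔻`, then for any sequences `a, b` in the closed unit disk,
`𝒞(a) − 𝒞(b) ∈ J ↔ 𝒰(a,α) − 𝒰(b,β) ∈ J`. -/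
theorem cmv_sub_mem_ideal_iff_moebius_sub_mem_ideal
    (J : Set B2) (hJ : IsHermitianIdeal J)
    (α β : ℕ → ℂ) (hα0 : α 0 = 0) (hβ0 : β 0 = 0)
    (hα : CompactlyIncluded α) (hβ : CompactlyIncluded β)
    (a b : ℕ → ℂ) (ha : ∀ n, 1 ≤ n → ‖a n‖ ≤ 1) (hb : ∀ n, 1 ≤ n → ‖b n‖ ≤ 1)
    (Aop Bop Coa Cea Cob Ceb : B2)
    (hAop : IsDiagonal α Aop) (hBop : IsDiagonal β Bop)
    (hCoa : IsCMVodd a Coa) (hCea : IsCMVeven a Cea)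
    (hCob : IsCMVodd b Cob) (hCeb : IsCMVeven b Ceb)
    (hAB : Aop - Bop ∈ J) :
    Coa * Cea - Cob * Ceb ∈ J ↔
      zetaTilde Aop (Coa * Cea) - zetaTilde Bop (Cob * Ceb) ∈ J := by
  obtain ⟨rα, hrα, hαb⟩ := hα
  obtain ⟨rβ, hrβ, hβb⟩ := hβ
  obtain ⟨hJ0, hJadd, hJsmul, hJmulL, hJmulR, hJstar⟩ := hJ
  have hJneg : ∀ S : B2, S ∈ J → -S ∈ J := fun S hS => by
    simpa using hJsmul (-1) S hS
  have hJsub : ∀ S T : B2, S ∈ J → T ∈ J → S - T ∈ J := fun S T hS hT => by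
    rw [sub_eq_add_neg]; exact hJadd _ _ hS (hJneg _ hT)
  have congr_mul : ∀ X X' Y Y' : B2, X - X' ∈ J → Y - Y' ∈ J → X * Y - X' * Y' ∈ J := by
    intro X X' Y Y' h1 h2
    have e : X * Y - X' * Y' = X * (Y - Y') + (X - X') * Y' := by noncomm_ring
    rw [e]
    exact hJadd _ _ (hJmulL _ X h2) (hJmulR _ Y' h1)
  have congr_inv : ∀ X X' : B2, IsUnit X → IsUnit X' → X - X' ∈ J →
      Ring.inverse X - Ring.inverse X' ∈ J := by
    intro X X' hu hu' h
    have h1 : Ring.inverse X * (X' * Ring.inverse X') = Ring.inverse X := by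
      rw [Ring.mul_inverse_cancel _ hu', mul_one]
    have h2 : Ring.inverse X * (X * Ring.inverse X') = Ring.inverse X' := by
      rw [← mul_assoc, Ring.inverse_mul_cancel _ hu, one_mul]
    have key : Ring.inverse X * ((X' - X) * Ring.inverse X')
        = Ring.inverse X - Ring.inverse X' := by
      rw [sub_mul, mul_sub, h1, h2]
    rw [← key]
    have hmem : X' - X ∈ J := by
      have := hJneg _ h
      rwa [neg_sub] at this
    exact hJmulL _ _ (hJmulR _ _ hmem)
  -- radius bounds
  set r : ℝ := max (max rα rβ) 0 with hrdef
  have hr0 : 0 ≤ r := le_max_right _ _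
  have hr1 : r < 1 := max_lt (max_lt hrα hrβ) one_pos
  have hαr : ∀ n, ‖α n‖ ≤ r := fun n =>
    (hαb n).trans ((le_max_left rα rβ).trans (le_max_left _ 0))
  have hβr : ∀ n, ‖β n‖ ≤ r := fun n =>
    (hβb n).trans ((le_max_right rα rβ).trans (le_max_left _ 0))
  set s : ℕ → ℝ := fun n => Real.sqrt (1 - ‖α n‖ ^ 2) with hsdef
  set t : ℕ → ℝ := fun n => Real.sqrt (1 - ‖β n‖ ^ 2) with htdef
  have hαsq : ∀ n, ‖α n‖ ^ 2 ≤ r ^ 2 := fun n => by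
    nlinarith [hαr n, norm_nonneg (α n), hr0]
  have hβsq : ∀ n, ‖β n‖ ^ 2 ≤ r ^ 2 := fun n => by
    nlinarith [hβr n, norm_nonneg (β n), hr0]
  set c : ℝ := Real.sqrt (1 - r ^ 2) with hcdef
  have hc : 0 < c := Real.sqrt_pos.mpr (by nlinarith)
  have hcs : ∀ n, c ≤ s n := fun n => Real.sqrt_le_sqrt (by nlinarith [hαsq n])
  have hct : ∀ n, c ≤ t n := fun n => Real.sqrt_le_sqrt (by nlinarith [hβsq n])
  have hspos : ∀ n, 0 < s n := fun n => lt_of_lt_of_le hc (hcs n)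
  have htpos : ∀ n, 0 < t n := fun n => lt_of_lt_of_le hc (hct n)
  have hs1 : ∀ n, s n ≤ 1 := fun n => Real.sqrt_le_one.mpr (by nlinarith [norm_nonneg (α n)])
  have ht1 : ∀ n, t n ≤ 1 := fun n => Real.sqrt_le_one.mpr (by nlinarith [norm_nonneg (β n)])
  have hssq : ∀ n, s n * s n = 1 - ‖α n‖ ^ 2 := fun n =>
    Real.mul_self_sqrt (by nlinarith [hαsq n])
  have htsq : ∀ n, t n * t n = 1 - ‖β n‖ ^ 2 := fun n =>
    Real.mul_self_sqrt (by nlinarith [hβsq n])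
  -- diagonal operators
  obtain ⟨Sa, hSa⟩ := exists_diag (fun n => ((s n : ℝ) : ℂ)) 1 (fun n => by
    rw [Complex.norm_real, Real.norm_eq_abs, abs_of_nonneg (hspos n).le]; exact hs1 n)
  obtain ⟨Sb, hSb⟩ := exists_diag (fun n => ((t n : ℝ) : ℂ)) 1 (fun n => by
    rw [Complex.norm_real, Real.norm_eq_abs, abs_of_nonneg (htpos n).le]; exact ht1 n)
  obtain ⟨Va, hVa⟩ := exists_diag (fun n => (((s n)⁻¹ : ℝ) : ℂ)) c⁻¹ (fun n => by
    rw [Complex.norm_real, Real.norm_eq_abs, abs_of_nonneg (inv_nonneg.mpr (hspos n).le)]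
    exact inv_anti₀ hc (hcs n))
  obtain ⟨Vb, hVb⟩ := exists_diag (fun n => (((t n)⁻¹ : ℝ) : ℂ)) c⁻¹ (fun n => by
    rw [Complex.norm_real, Real.norm_eq_abs, abs_of_nonneg (inv_nonneg.mpr (htpos n).le)]
    exact inv_anti₀ hc (hct n))
  obtain ⟨Mop, hMop⟩ := exists_diag (fun n => (((s n + t n)⁻¹ : ℝ) : ℂ)) c⁻¹ (fun n => by
    rw [Complex.norm_real, Real.norm_eq_abs,
      abs_of_nonneg (inv_nonneg.mpr (by positivity : (0:ℝ) ≤ s n + t n))]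
    exact inv_anti₀ hc ((hcs n).trans (le_add_of_nonneg_right (htpos n).le)))
  obtain ⟨A', hA'⟩ := exists_diag (fun n => (starRingEnd ℂ) (α n)) r (fun n => by
    rw [RCLike.norm_conj]; exact hαr n)
  obtain ⟨B', hB'⟩ := exists_diag (fun n => (starRingEnd ℂ) (β n)) r (fun n => by
    rw [RCLike.norm_conj]; exact hβr n)
  have hstarA : star Aop = A' := diag_star hAop hA'
  have hstarB : star Bop = B' := diag_star hBop hB'
  have hAA' : IsDiagonal (fun n => α n * (starRingEnd ℂ) (α n)) (Aop * star Aop) := by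
    rw [hstarA]; exact diag_mul hAop hA'
  have hA'A : IsDiagonal (fun n => (starRingEnd ℂ) (α n) * α n) (star Aop * Aop) := by
    rw [hstarA]; exact diag_mul hA' hAop
  have hBB' : IsDiagonal (fun n => β n * (starRingEnd ℂ) (β n)) (Bop * star Bop) := by
    rw [hstarB]; exact diag_mul hBop hB'
  have hB'B : IsDiagonal (fun n => (starRingEnd ℂ) (β n) * β n) (star Bop * Bop) := by
    rw [hstarB]; exact diag_mul hB' hBop
  have hnsα : ∀ n, α n * (starRingEnd ℂ) (α n) = ((‖α n‖ ^ 2 : ℝ) : ℂ) := fun n => by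
    have h : Complex.normSq (α n) = ‖α n‖ ^ 2 := by
      rw [Complex.normSq_eq_norm_sq]
    rw [Complex.mul_conj, h]
  have hnsβ : ∀ n, β n * (starRingEnd ℂ) (β n) = ((‖β n‖ ^ 2 : ℝ) : ℂ) := fun n => by
    have h : Complex.normSq (β n) = ‖β n‖ ^ 2 := by
      rw [Complex.normSq_eq_norm_sq]
    rw [Complex.mul_conj, h]
  have sdiagα : ∀ n, (1 : ℂ) - α n * (starRingEnd ℂ) (α n)
      = ((s n : ℝ) : ℂ) * ((s n : ℝ) : ℂ) := fun n => by
    rw [hnsα n, ← Complex.ofReal_mul, hssq n]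
    push_cast
    ring
  have sdiagβ : ∀ n, (1 : ℂ) - β n * (starRingEnd ℂ) (β n)
      = ((t n : ℝ) : ℂ) * ((t n : ℝ) : ℂ) := fun n => by
    rw [hnsβ n, ← Complex.ofReal_mul, htsq n]
    push_cast
    ring
  have h1A : 1 - Aop * star Aop = Sa * Sa :=
    diag_unique (diag_sub diag_one hAA') (diag_mul hSa hSa) (fun n => sdiagα n)
  have h1A' : 1 - star Aop * Aop = Sa * Sa :=
    diag_unique (diag_sub diag_one hA'A) (diag_mul hSa hSa) (fun n => by
      rw [mul_comm ((starRingEnd ℂ) (α n)) (α n)]; exact sdiagα n)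
  have h1B : 1 - Bop * star Bop = Sb * Sb :=
    diag_unique (diag_sub diag_one hBB') (diag_mul hSb hSb) (fun n => sdiagβ n)
  have h1B' : 1 - star Bop * Bop = Sb * Sb :=
    diag_unique (diag_sub diag_one hB'B) (diag_mul hSb hSb) (fun n => by
      rw [mul_comm ((starRingEnd ℂ) (β n)) (β n)]; exact sdiagβ n)
  have hSa0 : 0 ≤ Sa := diag_nonneg (fun n => (hspos n).le) hs1 hSa
  have hSb0 : 0 ≤ Sb := diag_nonneg (fun n => (htpos n).le) ht1 hSb
  have hEtaA : eta Aop = Sa := by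
    have e : eta Aop = CFC.sqrt (1 - Aop * star Aop) := rfl
    rw [e, h1A]
    exact CFC.sqrt_unique rfl hSa0
  have hEtaA' : eta (star Aop) = Sa := by
    have e : eta (star Aop) = CFC.sqrt (1 - star Aop * star (star Aop)) := rfl
    rw [e, star_star, h1A']
    exact CFC.sqrt_unique rfl hSa0
  have hEtaB : eta Bop = Sb := by
    have e : eta Bop = CFC.sqrt (1 - Bop * star Bop) := rfl
    rw [e, h1B]
    exact CFC.sqrt_unique rfl hSb0
  have hEtaB' : eta (star Bop) = Sb := by
    have e : eta (star Bop) = CFC.sqrt (1 - star Bop * star (star Bop)) := rfl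
    rw [e, star_star, h1B']
    exact CFC.sqrt_unique rfl hSb0
  have hSaVa : Sa * Va = 1 :=
    diag_unique (diag_mul hSa hVa) diag_one (fun n => by
      rw [← Complex.ofReal_mul, mul_inv_cancel₀ (hspos n).ne']
      exact Complex.ofReal_one)
  have hVaSa : Va * Sa = 1 :=
    diag_unique (diag_mul hVa hSa) diag_one (fun n => by
      rw [← Complex.ofReal_mul, inv_mul_cancel₀ (hspos n).ne']
      exact Complex.ofReal_one)
  have hSbVb : Sb * Vb = 1 :=
    diag_unique (diag_mul hSb hVb) diag_one (fun n => by
      rw [← Complex.ofReal_mul, mul_inv_cancel₀ (htpos n).ne']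
      exact Complex.ofReal_one)
  have hVbSb : Vb * Sb = 1 :=
    diag_unique (diag_mul hVb hSb) diag_one (fun n => by
      rw [← Complex.ofReal_mul, inv_mul_cancel₀ (htpos n).ne']
      exact Complex.ofReal_one)
  have huSa : IsUnit Sa := ⟨⟨Sa, Va, hSaVa, hVaSa⟩, rfl⟩
  have huSb : IsUnit Sb := ⟨⟨Sb, Vb, hSbVb, hVbSb⟩, rfl⟩
  have hInvSa : Ring.inverse Sa = Va := ring_inverse_eq hSaVa hVaSa
  have hInvSb : Ring.inverse Sb = Vb := ring_inverse_eq hSbVb hVbSb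
  -- norms of the operators
  have hnA : ‖Aop‖ ≤ r := opnorm_le_of_coord Aop hr0 (fun x n => by
    rw [hAop, norm_mul]
    exact mul_le_mul_of_nonneg_right (hαr n) (norm_nonneg _))
  have hnB : ‖Bop‖ ≤ r := opnorm_le_of_coord Bop hr0 (fun x n => by
    rw [hBop, norm_mul]
    exact mul_le_mul_of_nonneg_right (hβr n) (norm_nonneg _))
  set C := Coa * Cea with hCdef
  set D := Cob * Ceb with hDdef
  have hnC : ‖C‖ ≤ 1 := by
    calc ‖C‖ ≤ ‖Coa‖ * ‖Cea‖ := norm_mul_le _ _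
      _ ≤ 1 * 1 := mul_le_mul (cmvodd_norm a ha hCoa) (cmveven_norm a ha hCea)
          (norm_nonneg _) zero_le_one
      _ = 1 := mul_one 1
  have hnD : ‖D‖ ≤ 1 := by
    calc ‖D‖ ≤ ‖Cob‖ * ‖Ceb‖ := norm_mul_le _ _
      _ ≤ 1 * 1 := mul_le_mul (cmvodd_norm b hb hCob) (cmveven_norm b hb hCeb)
          (norm_nonneg _) zero_le_one
      _ = 1 := mul_one 1
  have hKAu : IsUnit (1 + star Aop * C) := by
    have hn : ‖-(star Aop * C)‖ < 1 := by
      rw [norm_neg]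
      calc ‖star Aop * C‖ ≤ ‖star Aop‖ * ‖C‖ := norm_mul_le _ _
        _ ≤ r * 1 := by
            have hsn : ‖star Aop‖ = ‖Aop‖ := by
              rw [ContinuousLinearMap.star_eq_adjoint]
              exact LinearIsometryEquiv.norm_map _ _
            exact mul_le_mul (le_of_eq_of_le hsn hnA) hnC (norm_nonneg _) hr0
        _ < 1 := by linarith
    have h := (Units.oneSub _ hn).isUnit
    rwa [Units.val_oneSub, sub_neg_eq_add] at h
  have hKBu : IsUnit (1 + star Bop * D) := by
    have hn : ‖-(star Bop * D)‖ < 1 := by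
      rw [norm_neg]
      calc ‖star Bop * D‖ ≤ ‖star Bop‖ * ‖D‖ := norm_mul_le _ _
        _ ≤ r * 1 := by
            have hsn : ‖star Bop‖ = ‖Bop‖ := by
              rw [ContinuousLinearMap.star_eq_adjoint]
              exact LinearIsometryEquiv.norm_map _ _
            exact mul_le_mul (le_of_eq_of_le hsn hnB) hnD (norm_nonneg _) hr0
        _ < 1 := by linarith
    have h := (Units.oneSub _ hn).isUnit
    rwa [Units.val_oneSub, sub_neg_eq_add] at h
  set KA := 1 + star Aop * C with hKAdef
  set KB := 1 + star Bop * D with hKBdef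
  set iKA := Ring.inverse KA with hiKAdef
  set iKB := Ring.inverse KB with hiKBdef
  have hKiKA : KA * iKA = 1 := Ring.mul_inverse_cancel _ hKAu
  have hiKKA : iKA * KA = 1 := Ring.inverse_mul_cancel _ hKAu
  have hKiKB : KB * iKB = 1 := Ring.mul_inverse_cancel _ hKBu
  have hiKKB : iKB * KB = 1 := Ring.inverse_mul_cancel _ hKBu
  have hASa : Aop * Sa = Sa * Aop := diag_comm hAop hSa
  have hA'Sa : star Aop * Sa = Sa * star Aop := by rw [hstarA]; exact diag_comm hA' hSa
  have hBSb : Bop * Sb = Sb * Bop := diag_comm hBop hSb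
  have hB'Sb : star Bop * Sb = Sb * star Bop := by rw [hstarB]; exact diag_comm hB' hSb
  obtain ⟨invlA, invrA, hCidA⟩ :=
    moebius_backward Aop (star Aop) C Sa Va KA iKA hSaVa hVaSa hKiKA hiKKA hKAdef
      h1A.symm h1A'.symm hASa hA'Sa
  obtain ⟨invlB, invrB, hDidB⟩ :=
    moebius_backward Bop (star Bop) D Sb Vb KB iKB hSbVb hVbSb hKiKB hiKKB hKBdef
      h1B.symm h1B'.symm hBSb hB'Sb
  set ZA := Va * (C + Aop) * iKA * Sa with hZAdef
  set ZB := Vb * (D + Bop) * iKB * Sb with hZBdef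
  have huWA : IsUnit (1 - star Aop * ZA) := ⟨⟨_, Va * KA * Va, invlA, invrA⟩, rfl⟩
  have huWB : IsUnit (1 - star Bop * ZB) := ⟨⟨_, Vb * KB * Vb, invlB, invrB⟩, rfl⟩
  have hinvWA : Ring.inverse (1 - star Aop * ZA) = Va * KA * Va := by
    refine ring_inverse_eq ?_ ?_
    · exact invlA
    · exact invrA
  have hinvWB : Ring.inverse (1 - star Bop * ZB) = Vb * KB * Vb := by
    refine ring_inverse_eq ?_ ?_
    · exact invlB
    · exact invrB
  have hCeq : C = Va * (ZA - Aop) * Ring.inverse (1 - star Aop * ZA) * Sa := by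
    rw [hinvWA]
    exact hCidA.symm
  have hDeq : D = Vb * (ZB - Bop) * Ring.inverse (1 - star Bop * ZB) * Sb := by
    rw [hinvWB]
    exact hDidB.symm
  have hzA : zetaTilde Aop C = ZA := by
    have e : zetaTilde Aop C
        = Ring.inverse (eta Aop) * (C + Aop) * Ring.inverse (1 + star Aop * C) * eta (star Aop) :=
      rfl
    rw [e, hEtaA, hEtaA', hInvSa, ← hKAdef, ← hiKAdef, ← hZAdef]
  have hzB : zetaTilde Bop D = ZB := by
    have e : zetaTilde Bop D
        = Ring.inverse (eta Bop) * (D + Bop) * Ring.inverse (1 + star Bop * D) * eta (star Bop) :=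
      rfl
    rw [e, hEtaB, hEtaB', hInvSb, ← hKBdef, ← hiKBdef, ← hZBdef]
  -- basic memberships
  have mBA : Bop - Aop ∈ J := by
    have := hJneg _ hAB
    rwa [neg_sub] at this
  have mstar : star Aop - star Bop ∈ J := by
    have h := hJstar _ hAB
    rwa [star_sub] at h
  have mstar' : star Bop - star Aop ∈ J := by
    have := hJneg _ mstar
    rwa [neg_sub] at this
  have mBBAA : Bop * star Bop - Aop * star Aop ∈ J := congr_mul _ _ _ _ mBA mstar'
  have mSab : Sa - Sb ∈ J := by
    have hfact : Sa - Sb = Mop * (Bop * star Bop - Aop * star Aop) := by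
      refine diag_unique (diag_sub hSa hSb) (diag_mul hMop (diag_sub hBB' hAA')) (fun n => ?_)
      rw [hnsβ n, hnsα n, ← Complex.ofReal_sub, ← Complex.ofReal_sub, ← Complex.ofReal_mul]
      congr 1
      have hst : (0:ℝ) < s n + t n := add_pos (hspos n) (htpos n)
      rw [inv_mul_eq_div, eq_div_iff hst.ne']
      nlinarith [hssq n, htsq n]
    rw [hfact]
    exact hJmulL _ _ mBBAA
  have mVab : Va - Vb ∈ J := by
    rw [← hInvSa, ← hInvSb]
    exact congr_inv _ _ huSa huSb mSab
  constructor
  · intro hCD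
    rw [hzA, hzB, hZAdef, hZBdef]
    refine congr_mul _ _ _ _ (congr_mul _ _ _ _ (congr_mul _ _ _ _ mVab ?_) ?_) mSab
    · have e : (C + Aop) - (D + Bop) = (C - D) + (Aop - Bop) := by abel
      rw [e]
      exact hJadd _ _ hCD hAB
    · rw [hiKAdef, hiKBdef]
      refine congr_inv _ _ hKAu hKBu ?_
      have e : KA - KB = star Aop * C - star Bop * D := by
        rw [hKAdef, hKBdef]; abel
      rw [e]
      exact congr_mul _ _ _ _ mstar hCD
  · intro hZm
    rw [hzA, hzB] at hZm
    rw [hCeq, hDeq]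
    refine congr_mul _ _ _ _ (congr_mul _ _ _ _ (congr_mul _ _ _ _ mVab ?_) ?_) mSab
    · have e : (ZA - Aop) - (ZB - Bop) = (ZA - ZB) - (Aop - Bop) := by abel
      rw [e]
      exact hJsub _ _ hZm hAB
    · refine congr_inv _ _ huWA huWB ?_
      have e : (1 - star Aop * ZA) - (1 - star Bop * ZB)
          = -(star Aop * ZA - star Bop * ZB) := by abel
      rw [e]
      exact hJneg _ (congr_mul _ _ _ _ mstar hZm)
end
end

section
/- Fix n ≥ 1, parameters α_1, …, α_n ∈ 𝔻 (with α_0 = 0) and a_1, …, a_n ∈ 𝔻, and let φ_n and p_n = π_n φ_n be given by the orthogonal rational function recurrence. Let 𝒞_n be the n×n principal submatrix of the CMV matrix 𝒞(a). Then there exists a nonzero constant c ∈ ℂ such that p_n(z) = c · det( D*_n(z) − D_n(z) 𝒞_n ) for all z ∈ ℂ, where D*_n(z) = diag(z − α_0, …, z − α_{n−1}) and D_n(z) = diag(1 − conj(α_0) z, …, 1 − conj(α_{n−1}) z). In particular, the zeros of φ_n are exactly the eigenvalues of the matrix pair (D*-part, D-part), equivalently of ζ̃_{𝒜_n}(𝒞_n)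 with 𝒜_n = diag(α_0, …, α_{n−1}). -/
/-!
Setup for orthogonal rational functions on the unit circle: `ϖ_k(z) = 1 − conj(α_k) z`,
`ϖ*_k(z) = z − α_k`, `η_k = (1 − |α_k|²)^{1/2}`, `ρ_k = (1 − |a_k|²)^{1/2}`,
`e_k = η_k/(η_{k−1} ρ_k)` (conventions `α_0 = 0`, `a_0 = 1`).
-/

noncomputable section

/-- `ϖ_k(z) = 1 − conj(α_k) z`. -/
def pw (α : ℕ → ℂ) (k : ℕ) (z : ℂ) : ℂ := 1 - (starRingEnd ℂ) (α k) * z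

/-- `ϖ*_k(z) = z − α_k`. -/
def pws (α : ℕ → ℂ) (k : ℕ) (z : ℂ) : ℂ := z - α k

/-- `η_k = (1 − |α_k|²)^{1/2}`. -/
def etaS (α : ℕ → ℂ) (k : ℕ) : ℝ := Real.sqrt (1 - ‖α k‖ ^ 2)

/-- `ρ_k = (1 − |a_k|²)^{1/2}`. -/
def rhoS (a : ℕ → ℂ) (k : ℕ) : ℝ := Real.sqrt (1 - ‖a k‖ ^ 2)

/-- `e_k = η_k/(η_{k−1} ρ_k)`. -/
def eS (α a : ℕ → ℂ) (k : ℕ) : ℝ := etaS α k / (etaS α (k - 1) * rhoS a k)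

/-- The pair of numerator polynomials `(p_k, p*_k)` of the orthogonal rational functions
`φ_k = p_k/π_k`, `φ*_k = p*_k/π_k`, obtained by clearing denominators in the recurrence:
`p_k = e_k (ϖ*_{k−1} p_{k−1} + a_k ϖ_{k−1} p*_{k−1})`,
`p*_k = e_k (conj(a_k) ϖ*_{k−1} p_{k−1} + ϖ_{k−1} p*_{k−1})`, `p_0 = p*_0 = 1`. -/
def orfNum (α a : ℕ → ℂ) : ℕ → (ℂ → ℂ) × (ℂ → ℂ)
  | 0 => (fun _ => 1, fun _ => 1)
  | k + 1 =>
    (fun z => (eS α a (k + 1) : ℂ) *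
        (pws α k z * (orfNum α a k).1 z + a (k + 1) * pw α k z * (orfNum α a k).2 z),
     fun z => (eS α a (k + 1) : ℂ) *
        ((starRingEnd ℂ) (a (k + 1)) * pws α k z * (orfNum α a k).1 z +
          pw α k z * (orfNum α a k).2 z))

/-- Entries of the infinite matrix `𝒞_o = Θ₁ ⊕ Θ₃ ⊕ ⋯` (rows/columns from 0). -/
def CoEntry (a : ℕ → ℂ) (i j : ℕ) : ℂ :=
  if i = j then (if i % 2 = 0 then -(a (i + 1)) else (starRingEnd ℂ) (a i))
  else if j = i + 1 ∧ i % 2 = 0 then (rhoS a (i + 1) : ℂ)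
  else if i = j + 1 ∧ j % 2 = 0 then (rhoS a (j + 1) : ℂ)
  else 0

/-- Entries of the infinite matrix `𝒞_e = (1) ⊕ Θ₂ ⊕ Θ₄ ⊕ ⋯` (rows/columns from 0). -/
def CeEntry (a : ℕ → ℂ) (i j : ℕ) : ℂ :=
  if i = j then (if i = 0 then 1 else if i % 2 = 1 then -(a (i + 1)) else (starRingEnd ℂ) (a i))
  else if j = i + 1 ∧ i % 2 = 1 then (rhoS a (i + 1) : ℂ)
  else if i = j + 1 ∧ j % 2 = 1 then (rhoS a (j + 1) : ℂ)
  else 0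

/-- The `n×n` principal submatrix `𝒞_n = 𝒞_{o,n} 𝒞_{e,n}` of the CMV matrix. -/
def cmvN (a : ℕ → ℂ) (n : ℕ) : Matrix (Fin n) (Fin n) ℂ :=
  (Matrix.of fun i j : Fin n => CoEntry a i j) * (Matrix.of fun i j : Fin n => CeEntry a i j)

/-- The diagonal matrix `η_{𝒜_n} = diag(η_0, …, η_{n−1})`. -/
def etaMat (α : ℕ → ℂ) (n : ℕ) : Matrix (Fin n) (Fin n) ℂ :=
  Matrix.diagonal fun i : Fin n => (etaS α i : ℂ)

/-- The matrix Möbius transformation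
`ζ̃_{𝒜_n}(T) = η_{𝒜_n}⁻¹ (T + 𝒜_n)(1 + 𝒜_n† T)⁻¹ η_{𝒜_n}` for the diagonal matrix
`𝒜_n = diag(α_0, …, α_{n−1})` (which is normal, so `η_{𝒜_n†} = η_{𝒜_n}`). -/
def zetaTildeMat (α : ℕ → ℂ) {n : ℕ} (T : Matrix (Fin n) (Fin n) ℂ) :
    Matrix (Fin n) (Fin n) ℂ :=
  (etaMat α n)⁻¹ * (T + Matrix.diagonal fun i : Fin n => α i) *
    (1 + (Matrix.diagonal fun i : Fin n => (starRingEnd ℂ) (α i)) * T)⁻¹ * etaMat α n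

section AuxDev
open Matrix


lemma det_tridiag_step (A : ℕ → ℕ → ℂ)
    (htri : ∀ i j, j + 2 ≤ i ∨ i + 2 ≤ j → A i j = 0) (k : ℕ) :
    (Matrix.of fun i j : Fin (k+2) => A i j).det =
      A (k+1) (k+1) * (Matrix.of fun i j : Fin (k+1) => A i j).det
        - A (k+1) k * (A k (k+1) * (Matrix.of fun i j : Fin k => A i j).det) := by
  rw [show ((k+2) = (k+1).succ) from rfl, Matrix.det_succ_row _ (Fin.last (k+1))]
  rw [Fin.sum_univ_castSucc, Fin.sum_univ_castSucc]
  have hz : ∀ j : Fin k, ((-1:ℂ) ^ ((Fin.last (k+1) : ℕ) + ((j.castSucc.castSucc : Fin (k+2)) : ℕ))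
      * Matrix.of (fun i j : Fin (k+2) => A i j) (Fin.last (k+1)) j.castSucc.castSucc
      * ((Matrix.of (fun i j : Fin (k+2) => A i j)).submatrix (Fin.last (k+1)).succAbove
          (j.castSucc.castSucc).succAbove).det) = 0 := by
    intro j
    have : A (k+1) ((j : ℕ)) = 0 := htri _ _ (Or.inl (by omega))
    simp only [Matrix.of_apply, Fin.coe_castSucc, Fin.val_last, this]
    ring
  rw [Finset.sum_congr rfl (fun j _ => hz j), Finset.sum_const_zero, zero_add]
  -- remaining two terms
  have hsub1 : ((Matrix.of (fun i j : Fin (k+2) => A i j)).submatrix (Fin.last (k+1)).succAbove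
      (Fin.last (k+1)).succAbove) = Matrix.of fun i j : Fin (k+1) => A i j := by
    ext i j
    simp [Fin.succAbove_last]
  have hsign1 : ((-1:ℂ) ^ ((Fin.last (k+1) : ℕ) + ((Fin.last (k+1) : Fin (k+2)) : ℕ))) = 1 := by
    simp only [Fin.val_last]
    rw [show (k+1) + (k+1) = 2*(k+1) by ring, pow_mul]
    norm_num
  have hsign2 : ((-1:ℂ) ^ ((Fin.last (k+1) : ℕ) + (((Fin.last k).castSucc : Fin (k+2)) : ℕ))) = -1 := by
    simp only [Fin.val_last, Fin.coe_castSucc]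
    rw [show (k+1) + k = 2*k+1 by ring, pow_succ, pow_mul]
    norm_num
  -- inner minor for column castSucc (last k)
  set B := ((Matrix.of (fun i j : Fin (k+2) => A i j)).submatrix (Fin.last (k+1)).succAbove
      ((Fin.last k).castSucc : Fin (k+2)).succAbove) with hB
  have hBdet : B.det = A k (k+1) * (Matrix.of fun i j : Fin k => A i j).det := by
    rw [Matrix.det_succ_column B (Fin.last k),
      Fin.sum_univ_castSucc]
    have hz2 : ∀ i : Fin k, ((-1:ℂ) ^ (((i.castSucc : Fin (k+1)) : ℕ) + ((Fin.last k : Fin (k+1)) : ℕ))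
        * B i.castSucc (Fin.last k)
        * (B.submatrix (i.castSucc).succAbove (Fin.last k).succAbove).det) = 0 := by
      intro i
      have hBe : B i.castSucc (Fin.last k) = A i (k+1) := by
        simp [hB, Fin.succAbove, Fin.lt_def]
      have : A (i : ℕ) (k+1) = 0 := htri _ _ (Or.inr (by omega))
      rw [hBe, this]
      ring
    rw [Finset.sum_congr rfl (fun i _ => hz2 i), Finset.sum_const_zero, zero_add]
    have hBe2 : B (Fin.last k) (Fin.last k) = A k (k+1) := by
      simp [hB, Fin.succAbove, Fin.lt_def]
    have hsign3 : ((-1:ℂ) ^ (((Fin.last k : Fin (k+1)) : ℕ) + ((Fin.last k : Fin (k+1)) : ℕ))) = 1 := by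
      simp only [Fin.val_last]
      rw [show k + k = 2*k by ring, pow_mul]; norm_num
    have hsub3 : (B.submatrix (Fin.last k).succAbove (Fin.last k).succAbove)
        = Matrix.of fun i j : Fin k => A i j := by
      ext i j
      simp [hB, Fin.succAbove, Fin.lt_def, j.isLt]
    rw [hBe2, hsign3, hsub3]
    ring
  simp only [Matrix.of_apply, Fin.val_last, Fin.coe_castSucc] at *
  rw [hsign1, hsign2, hsub1, hBdet]
  ring


/-- generic CMV-even-factor entry: `1 ⊕ Θ₂ ⊕ Θ₄ ⊕ ⋯` with `Θ_k = [[−A_k, r_k],[r_k, B_k]]`. -/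
def ceE (A B r : ℕ → ℂ) (i j : ℕ) : ℂ :=
  if i = j then (if i = 0 then 1 else if i % 2 = 1 then -(A (i + 1)) else B i)
  else if j = i + 1 ∧ i % 2 = 1 then r (i + 1)
  else if i = j + 1 ∧ j % 2 = 1 then r (j + 1)
  else 0

section ceE_eval
variable (A B r : ℕ → ℂ)

lemma ceE_zero {i k : ℕ} (h1 : k ≠ i) (h2 : ¬(k = i + 1 ∧ i % 2 = 1))
    (h3 : ¬(i = k + 1 ∧ k % 2 = 1)) : ceE A B r i k = 0 := by
  unfold ceE; split_ifs <;> first | rfl | omega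

lemma ceE_diag0 : ceE A B r 0 0 = 1 := by unfold ceE; split_ifs <;> first | rfl | omega

lemma ceE_diag_odd {i : ℕ} (h : i % 2 = 1) : ceE A B r i i = -(A (i+1)) := by
  unfold ceE; split_ifs <;> first | rfl | omega

lemma ceE_diag_even {i : ℕ} (h : i % 2 = 0) (h0 : i ≠ 0) : ceE A B r i i = B i := by
  unfold ceE; split_ifs <;> first | rfl | omega

lemma ceE_above {i : ℕ} (h : i % 2 = 1) : ceE A B r i (i+1) = r (i+1) := by
  unfold ceE; split_ifs <;> first | rfl | omega

lemma ceE_below {i : ℕ} (h : i % 2 = 1) : ceE A B r (i+1) i = r (i+1) := by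
  unfold ceE; split_ifs <;> first | rfl | omega

end ceE_eval

lemma ceInv_mul (n : ℕ) (A B Bb r : ℕ → ℂ)
    (hd : ∀ k, 1 ≤ k → k + 1 ≤ n → A k * Bb k + r k ^ 2 = 1)
    (hBB : ∀ k, 1 ≤ k → k + 1 ≤ n → Bb k = B k)
    (hlast : n % 2 = 0 → 1 ≤ n → Bb n * A n = 1) :
    (Matrix.of fun i j : Fin n => ceE Bb A r i j) * (Matrix.of fun i j : Fin n => ceE A B r i j)
      = 1 := by
  ext i j
  rw [Matrix.mul_apply, Matrix.one_apply]
  have hij : (i = j) ↔ (i.val = j.val) := Fin.ext_iff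
  rcases Nat.eq_zero_or_pos i.val with h0 | hpos
  · -- row 0
    rw [Finset.sum_eq_single_of_mem i (Finset.mem_univ i) ?_]
    · simp only [Matrix.of_apply, h0, ceE_diag0, one_mul]
      by_cases hj : j.val = 0
      · rw [show (j:ℕ) = 0 from hj, ceE_diag0, if_pos (hij.mpr (by omega))]
      · rw [ceE_zero A B r (by omega) (by omega) (by omega), if_neg (by omega ∘ hij.mp)]
    · intro b _ hb
      have hbv : (b : ℕ) ≠ i.val := fun hc => hb (Fin.ext hc)
      simp only [Matrix.of_apply]
      rw [ceE_zero Bb A r (by omega) (by omega) (by omega), zero_mul]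
  · rcases Nat.even_or_odd i.val with ⟨m2, hm2⟩ | ⟨m2, hm2⟩
    · -- i even ≥ 2 : i = m+1 with m odd; terms at m, m+1
      obtain ⟨m, hm⟩ : ∃ m, i.val = m + 1 := ⟨i.val - 1, by omega⟩
      have hmodd : m % 2 = 1 := by omega
      have him : (⟨m, by omega⟩ : Fin n) ≠ i := Fin.ne_of_val_ne (by simp; omega)
      rw [Finset.sum_eq_add_of_mem ⟨m, by omega⟩ i (Finset.mem_univ _) (Finset.mem_univ _)
          him ?_]
      · simp only [Matrix.of_apply, hm]
        rw [ceE_below Bb A r hmodd, ceE_diag_even Bb A r (by omega) (by omega)]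
        -- note: (ceE Bb A r) has A in the "B-slot": diag even = A (m+1)
        by_cases hj1 : j.val = m
        · rw [show (j:ℕ) = m from hj1, ceE_diag_odd A B r hmodd, ceE_below A B r hmodd,
            if_neg (by omega ∘ hij.mp)]
          ring
        · by_cases hj2 : j.val = m + 1
          · rw [show (j:ℕ) = m + 1 from hj2, ceE_above A B r hmodd, ceE_diag_even A B r (by omega) (by omega),
              if_pos (hij.mpr (by omega))]
            have h1 := hd (m+1) (by omega) (by omega)
            have h2 := hBB (m+1) (by omega) (by omega)
            rw [h2] at h1
            linear_combination h1
          · rw [ceE_zero A B r (i := m) (k := (j:ℕ)) (by omega) (by omega) (by omega),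
              ceE_zero A B r (i := m+1) (k := (j:ℕ)) (by omega) (by omega) (by omega)]
            rw [if_neg (by omega ∘ hij.mp)]
            ring
      · intro c _ hc
        have hc1 : (c : ℕ) ≠ m := fun h => hc.1 (Fin.ext (by simpa using h))
        have hc2 : (c : ℕ) ≠ i.val := fun h => hc.2 (Fin.ext h)
        simp only [Matrix.of_apply]
        rw [ceE_zero Bb A r (by omega) (by omega) (by omega), zero_mul]
    · -- i odd
      by_cases hlt : i.val + 1 < n
      · -- full block: terms at i, i+1
        have hne : i ≠ (⟨i.val + 1, hlt⟩ : Fin n) := Fin.ne_of_val_ne (by simp)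
        rw [Finset.sum_eq_add_of_mem i ⟨i.val + 1, hlt⟩ (Finset.mem_univ _) (Finset.mem_univ _)
            hne ?_]
        · simp only [Matrix.of_apply]
          have hiodd : i.val % 2 = 1 := by omega
          rw [ceE_diag_odd Bb A r hiodd, ceE_above Bb A r hiodd]
          by_cases hj1 : j.val = i.val
          · rw [show (j:ℕ) = i.val from hj1, ceE_diag_odd A B r hiodd, ceE_below A B r hiodd,
              if_pos (hij.mpr (by omega))]
            have h1 := hd (i.val+1) (by omega) (by omega)
            linear_combination h1
          · by_cases hj2 : j.val = i.val + 1
            · rw [show (j:ℕ) = i.val + 1 from hj2, ceE_above A B r hiodd,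
                ceE_diag_even A B r (by omega) (by omega), if_neg (by omega ∘ hij.mp)]
              have h2 := hBB (i.val+1) (by omega) (by omega)
              rw [h2]
              ring
            · rw [ceE_zero A B r (by omega) (by omega) (by omega),
                ceE_zero A B r (by omega) (by omega) (by omega),
                if_neg (by omega ∘ hij.mp)]
              ring
        · intro c _ hc
          have hc1 : (c : ℕ) ≠ i.val := fun h => hc.1 (Fin.ext h)
          have hc2 : (c : ℕ) ≠ i.val + 1 := fun h => hc.2 (Fin.ext (by simpa using h))
          simp only [Matrix.of_apply]
          rw [ceE_zero Bb A r (by omega) (by omega) (by omega), zero_mul]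
      · -- cut block: i = n-1, n even; single term at i
        have hin : i.val + 1 = n := by have := i.isLt; omega
        have hnev : n % 2 = 0 := by omega
        have hiodd : i.val % 2 = 1 := by omega
        rw [Finset.sum_eq_single_of_mem i (Finset.mem_univ i) ?_]
        · simp only [Matrix.of_apply]
          rw [ceE_diag_odd Bb A r hiodd]
          by_cases hj1 : j.val = i.val
          · rw [show (j:ℕ) = i.val from hj1, ceE_diag_odd A B r hiodd, if_pos (hij.mpr (by omega))]
            have h1 := hlast hnev (by omega)
            rw [← hin] at h1
            linear_combination h1
          · rw [ceE_zero A B r (by omega) (by omega ∘ And.left) (by omega),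
              if_neg (by omega ∘ hij.mp)]
            ring
        · intro b _ hb
          have hbv : (b : ℕ) ≠ i.val := fun hc => hb (Fin.ext hc)
          have hbn : (b : ℕ) ≠ i.val + 1 := by have := b.isLt; omega
          simp only [Matrix.of_apply]
          rw [ceE_zero Bb A r (by omega) (by omega) (by omega), zero_mul]

/-- generic CMV-odd-factor entry: `Θ₁ ⊕ Θ₃ ⊕ ⋯`. -/
def coE (A B r : ℕ → ℂ) (i j : ℕ) : ℂ :=
  if i = j then (if i % 2 = 0 then -(A (i + 1)) else B i)
  else if j = i + 1 ∧ i % 2 = 0 then r (i + 1)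
  else if i = j + 1 ∧ j % 2 = 0 then r (j + 1)
  else 0

section coE_eval
variable (A B r : ℕ → ℂ)

lemma coE_zero {i k : ℕ} (h1 : k ≠ i) (h2 : ¬(k = i + 1 ∧ i % 2 = 0))
    (h3 : ¬(i = k + 1 ∧ k % 2 = 0)) : coE A B r i k = 0 := by
  unfold coE; split_ifs <;> first | rfl | omega

lemma coE_diag_even {i : ℕ} (h : i % 2 = 0) : coE A B r i i = -(A (i+1)) := by
  unfold coE; split_ifs <;> first | rfl | omega

lemma coE_diag_odd {i : ℕ} (h : i % 2 = 1) : coE A B r i i = B i := by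
  unfold coE; split_ifs <;> first | rfl | omega

lemma coE_above {i : ℕ} (h : i % 2 = 0) : coE A B r i (i+1) = r (i+1) := by
  unfold coE; split_ifs <;> first | rfl | omega

lemma coE_below {i : ℕ} (h : i % 2 = 0) : coE A B r (i+1) i = r (i+1) := by
  unfold coE; split_ifs <;> first | rfl | omega

end coE_eval

/-- the `e`-free recurrence pair `(q_k, q*_k)`. -/
def qp (α β A B : ℕ → ℂ) (z : ℂ) : ℕ → ℂ × ℂ
  | 0 => (1, 1)
  | (k+1) =>
      ((z - α k) * (qp α β A B z k).1 + A (k+1) * ((1:ℂ) - β k * z) * (qp α β A B z k).2,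
       B (k+1) * (z - α k) * (qp α β A B z k).1 + ((1:ℂ) - β k * z) * (qp α β A B z k).2)

/-- entries of the tridiagonal matrix `K = D* Minv − D L`. -/
def koE (α β A B Bb r : ℕ → ℂ) (z : ℂ) (i j : ℕ) : ℂ :=
  (z - α i) * ceE Bb A r i j - (1 - β i * z) * coE A B r i j

section koE_eval
variable (α β A B Bb r : ℕ → ℂ) (z : ℂ)

lemma koE_tri : ∀ i j, j + 2 ≤ i ∨ i + 2 ≤ j → koE α β A B Bb r z i j = 0 := by
  intro i j h
  unfold koE
  rw [ceE_zero Bb A r (by omega) (by omega) (by omega),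
    coE_zero A B r (by omega) (by omega) (by omega)]
  ring

lemma koE_00 : koE α β A B Bb r z 0 0 = (z - α 0) + A 1 * (1 - β 0 * z) := by
  unfold koE
  rw [ceE_diag0, coE_diag_even A B r (by omega)]
  ring

lemma koE_diag_odd {i : ℕ} (h : i % 2 = 1) :
    koE α β A B Bb r z i i = -((z - α i) * Bb (i+1) + (1 - β i * z) * B i) := by
  unfold koE
  rw [ceE_diag_odd Bb A r h, coE_diag_odd A B r h]
  ring

lemma koE_diag_even {i : ℕ} (h : i % 2 = 0) (h0 : i ≠ 0) :
    koE α β A B Bb r z i i = (z - α i) * A i + (1 - β i * z) * A (i+1) := by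
  unfold koE
  rw [ceE_diag_even Bb A r h h0, coE_diag_even A B r h]
  ring

lemma koE_sub_even {m : ℕ} (h : m % 2 = 0) :
    koE α β A B Bb r z (m+1) m = -((1 - β (m+1) * z) * r (m+1)) := by
  unfold koE
  rw [ceE_zero Bb A r (by omega) (by omega) (by omega), coE_below A B r h]
  ring

lemma koE_sup_even {m : ℕ} (h : m % 2 = 0) :
    koE α β A B Bb r z m (m+1) = -((1 - β m * z) * r (m+1)) := by
  unfold koE
  rw [ceE_zero Bb A r (by omega) (by omega) (by omega), coE_above A B r h]
  ring

lemma koE_sub_odd {m : ℕ} (h : m % 2 = 1) :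
    koE α β A B Bb r z (m+1) m = (z - α (m+1)) * r (m+1) := by
  unfold koE
  rw [ceE_below Bb A r h, coE_zero A B r (by omega) (by omega) (by omega)]
  ring

lemma koE_sup_odd {m : ℕ} (h : m % 2 = 1) :
    koE α β A B Bb r z m (m+1) = (z - α m) * r (m+1) := by
  unfold koE
  rw [ceE_above Bb A r h, coE_zero A B r (by omega) (by omega) (by omega)]
  ring

end koE_eval

/-- closed form for the leading principal minors of `K`. -/
lemma koE_minor (α β A B Bb r : ℕ → ℂ) (z : ℂ) (N : ℕ)
    (hr : ∀ k, 1 ≤ k → k + 1 ≤ N → A k * B k + r k ^ 2 = 1)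
    (hBb : ∀ k, 1 ≤ k → k ≤ N → k % 2 = 0 → Bb k = B k) :
    ∀ k, k ≤ N →
      (Matrix.of fun i j : Fin k => koE α β A B Bb r z i j).det
        = (-1) ^ (k / 2) *
            (if k % 2 = 1 then (qp α β A B z k).1 else (qp α β A B z k).2) := by
  intro k
  induction k using Nat.strong_induction_on with
  | _ k ih =>
    intro hk
    match k with
    | 0 => simp [qp]
    | 1 =>
      rw [Matrix.det_fin_one]
      simp only [Matrix.of_apply]
      rw [show ((0 : Fin 1) : ℕ) = 0 from rfl, koE_00]
      simp only [qp]
      norm_num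
    | (m+2) =>
      rw [det_tridiag_step _ (koE_tri α β A B Bb r z) m,
        ih (m+1) (by omega) (by omega), ih m (by omega) (by omega)]
      have hrel : A (m+1) * B (m+1) + r (m+1) ^ 2 = 1 := hr (m+1) (by omega) (by omega)
      rcases Nat.even_or_odd m with ⟨l, hl⟩ | ⟨l, hl⟩
      · -- m even : k = m+2 even
        have hm : m % 2 = 0 := by omega
        rw [koE_diag_odd α β A B Bb r z (i := m+1) (by omega),
          koE_sub_even α β A B Bb r z hm, koE_sup_even α β A B Bb r z hm]
        rw [if_pos (show (m+1) % 2 = 1 by omega), if_neg (show ¬(m % 2 = 1) by omega),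
          if_neg (show ¬((m+2) % 2 = 1) by omega)]
        rw [show (m+2)/2 = m/2 + 1 by omega, show (m+1)/2 = m/2 by omega]
        rw [show Bb (m+1+1) = B (m+1+1) from hBb (m+2) (by omega) (by omega) (by omega)]
        simp only [qp]
        linear_combination (-((-1:ℂ)^(m/2)) * (1 - β m * z) * (1 - β (m+1) * z)
          * (qp α β A B z m).2) * hrel
      · -- m odd : k = m+2 odd
        have hm : m % 2 = 1 := by omega
        rw [koE_diag_even α β A B Bb r z (i := m+1) (by omega) (by omega),
          koE_sub_odd α β A B Bb r z hm, koE_sup_odd α β A B Bb r z hm]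
        rw [if_neg (show ¬((m+1) % 2 = 1) by omega), if_pos (show m % 2 = 1 by omega),
          if_pos (show (m+2) % 2 = 1 by omega)]
        rw [show (m+2)/2 = m/2 + 1 by omega, show (m+1)/2 = m/2 + 1 by omega]
        simp only [qp]
        linear_combination (-((-1:ℂ)^(m/2)) * (z - α m) * (z - α (m+1))
          * (qp α β A B z m).1) * hrel

/-- closed form for the determinant of the truncated even factor `M_k`. -/
lemma ceE_det (A B r : ℕ → ℂ) (N : ℕ)
    (hr : ∀ k, 1 ≤ k → k + 1 ≤ N → A k * B k + r k ^ 2 = 1) :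
    ∀ k, 1 ≤ k → k ≤ N →
      (Matrix.of fun i j : Fin k => ceE A B r i j).det
        = (-1) ^ (k / 2) * (if k % 2 = 1 then 1 else A k) := by
  have htri : ∀ i j, j + 2 ≤ i ∨ i + 2 ≤ j → ceE A B r i j = 0 := by
    intro i j h
    exact ceE_zero A B r (by omega) (by omega) (by omega)
  intro k
  induction k using Nat.strong_induction_on with
  | _ k ih =>
    intro hk1 hk
    match k with
    | 1 =>
      rw [Matrix.det_fin_one]
      simp only [Matrix.of_apply]
      rw [show ((0 : Fin 1) : ℕ) = 0 from rfl, ceE_diag0]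
      norm_num
    | 2 =>
      rw [det_tridiag_step _ htri 0]
      rw [Matrix.det_fin_one]
      simp only [Matrix.of_apply]
      rw [show ((0 : Fin 1) : ℕ) = 0 from rfl, ceE_diag0,
        ceE_diag_odd A B r (by omega),
        ceE_zero A B r (i := 0) (k := 1) (by omega) (by omega) (by omega)]
      norm_num
    | (m+3) =>
      rw [det_tridiag_step _ htri (m+1),
        ih (m+2) (by omega) (by omega) (by omega), ih (m+1) (by omega) (by omega) (by omega)]
      rcases Nat.even_or_odd m with ⟨l, hl⟩ | ⟨l, hl⟩
      · -- m even : k = m+3 odd, middle index m+2 even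
        have hrel : A (m+2) * B (m+2) + r (m+2) ^ 2 = 1 := hr (m+2) (by omega) (by omega)
        rw [ceE_diag_even A B r (i := m+2) (by omega) (by omega),
          ceE_below A B r (i := m+1) (by omega),
          ceE_above A B r (i := m+1) (by omega)]
        rw [if_neg (show ¬((m+2) % 2 = 1) by omega), if_pos (show (m+1) % 2 = 1 by omega),
          if_pos (show (m+3) % 2 = 1 by omega)]
        rw [show (m+3)/2 = m/2 + 1 by omega, show (m+2)/2 = m/2 + 1 by omega,
          show (m+1)/2 = m/2 by omega]
        linear_combination (-((-1:ℂ)^(m/2))) * hrel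
      · -- m odd : k = m+3 even, middle index m+2 odd
        have hm2 : (m+2) % 2 = 1 := by omega
        rw [ceE_diag_odd A B r hm2,
          ceE_zero A B r (i := m+2) (k := m+1) (by omega) (by omega) (by omega),
          ceE_zero A B r (i := m+1) (k := m+2) (by omega) (by omega) (by omega)]
        rw [if_pos (show (m+2) % 2 = 1 by omega), if_neg (show ¬((m+1) % 2 = 1) by omega),
          if_neg (show ¬((m+3) % 2 = 1) by omega)]
        rw [show (m+3)/2 = m/2 + 2 by omega, show (m+2)/2 = m/2 + 1 by omega]
        ring

/-- Core determinant identity, odd/nonzero case. -/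
lemma core_aux (n : ℕ) (hn : 1 ≤ n) (α β A B r : ℕ → ℂ)
    (hr : ∀ k, 1 ≤ k → k + 1 ≤ n → A k * B k + r k ^ 2 = 1)
    (hAn : n % 2 = 0 → A n ≠ 0) (z : ℂ) :
    (Matrix.diagonal (fun i : Fin n => z - α i) -
      (Matrix.diagonal fun i : Fin n => 1 - β i * z) *
        ((Matrix.of fun i j : Fin n => coE A B r i j) *
          (Matrix.of fun i j : Fin n => ceE A B r i j))).det
      = (qp α β A B z n).1 := by
  set Bb : ℕ → ℂ := Function.update B n (A n)⁻¹ with hBbdef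
  have hBbk : ∀ k, k ≠ n → Bb k = B k := fun k hk => Function.update_of_ne hk _ _
  have hBbn : Bb n = (A n)⁻¹ := Function.update_self _ _ _
  -- the inverse of the even factor
  have hMinv : (Matrix.of fun i j : Fin n => ceE Bb A r i j) *
      (Matrix.of fun i j : Fin n => ceE A B r i j) = 1 := by
    rcases Nat.even_or_odd n with he | ho
    · apply ceInv_mul n A B Bb r
      · intro k h1 h2
        rw [hBbk k (by omega)]
        exact hr k h1 h2
      · intro k h1 h2
        exact hBbk k (by omega)
      · intro h _
        rw [hBbn]
        exact inv_mul_cancel₀ (hAn h)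
    · apply ceInv_mul n A B Bb r
      · intro k h1 h2
        rw [hBbk k (by omega)]
        exact hr k h1 h2
      · intro k h1 h2
        exact hBbk k (by omega)
      · intro h
        exfalso
        rcases ho with ⟨l, hl⟩
        omega
  set Dst := Matrix.diagonal (fun i : Fin n => z - α i) with hDst
  set Dm := Matrix.diagonal (fun i : Fin n => 1 - β i * z) with hDm
  set L := (Matrix.of fun i j : Fin n => coE A B r i j) with hL
  set M := (Matrix.of fun i j : Fin n => ceE A B r i j) with hM
  set Minv := (Matrix.of fun i j : Fin n => ceE Bb A r i j) with hMinvDef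
  have hfact : Dst - Dm * (L * M) = (Dst * Minv - Dm * L) * M := by
    rw [Matrix.sub_mul, Matrix.mul_assoc Dst Minv M, hMinv, Matrix.mul_one, Matrix.mul_assoc]
  have hK : Dst * Minv - Dm * L = Matrix.of fun i j : Fin n => koE α β A B Bb r z i j := by
    ext i j
    simp only [Matrix.sub_apply, hDst, hDm, Matrix.diagonal_mul, Matrix.of_apply, hMinvDef, hL]
    rfl
  rw [hfact, Matrix.det_mul, hK]
  have hdetM : M.det = (-1) ^ (n / 2) * (if n % 2 = 1 then 1 else A n) :=
    ceE_det A B r n hr n hn le_rfl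
  rcases Nat.even_or_odd n with ⟨l, hl⟩ | ⟨l, hl⟩
  · -- n even, n = m+2
    obtain ⟨m, hm⟩ : ∃ m, n = m + 2 := ⟨n - 2, by omega⟩
    have hmev : m % 2 = 0 := by omega
    subst hm
    rw [det_tridiag_step _ (koE_tri α β A B Bb r z) m]
    have hminor := koE_minor α β A B Bb r z (m+1)
      (fun k h1 h2 => hr k h1 (by omega))
      (fun k h1 h2 _ => hBbk k (by omega))
    rw [hminor (m+1) le_rfl, hminor m (by omega)]
    rw [koE_diag_odd α β A B Bb r z (i := m+1) (by omega),
      koE_sub_even α β A B Bb r z hmev, koE_sup_even α β A B Bb r z hmev,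
      hdetM]
    rw [if_pos (show (m+1) % 2 = 1 by omega), if_neg (show ¬(m % 2 = 1) by omega),
      if_neg (show ¬((m+2) % 2 = 1) by omega)]
    rw [show (m+2)/2 = m/2 + 1 by omega, show (m+1)/2 = m/2 by omega]
    rw [show Bb (m+1+1) = (A (m+2))⁻¹ from hBbn]
    have hrel : A (m+1) * B (m+1) + r (m+1) ^ 2 = 1 := hr (m+1) (by omega) (by omega)
    have hinv : (A (m+2))⁻¹ * A (m+2) = 1 := inv_mul_cancel₀ (hAn (by omega))
    have hs2 : ((-1:ℂ)) ^ (m/2) * ((-1:ℂ)) ^ (m/2) = 1 := by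
      rw [← pow_add]
      exact Even.neg_one_pow ⟨m/2, rfl⟩
    simp only [qp]
    linear_combination
      ((z - α (m+1)) * ((z - α m) * (qp α β A B z m).1
          + A (m+1) * (1 - β m * z) * (qp α β A B z m).2)) * hinv
      + (A (m+2) * (1 - β (m+1) * z) * (1 - β m * z) * (qp α β A B z m).2) * hrel
      + (-(A (m+2)) * (-((z - α (m+1)) * (A (m+2))⁻¹ + (1 - β (m+1) * z) * B (m+1))
            * ((z - α m) * (qp α β A B z m).1 + A (m+1) * (1 - β m * z) * (qp α β A B z m).2)
          - (1 - β (m+1) * z) * r (m+1) * ((1 - β m * z) * r (m+1) * (qp α β A B z m).2))) * hs2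
  · -- n odd
    have hminor := koE_minor α β A B Bb r z n
      (fun k h1 h2 => hr k h1 h2)
      (fun k h1 h2 hk2 => hBbk k (by omega))
    rw [hminor n le_rfl, hdetM, if_pos (show n % 2 = 1 by omega), if_pos (show n % 2 = 1 by omega)]
    have hs2 : ((-1:ℂ)) ^ (n/2) * ((-1:ℂ)) ^ (n/2) = 1 := by
      rw [← pow_add]
      exact Even.neg_one_pow ⟨n/2, rfl⟩
    linear_combination (qp α β A B z n).1 * hs2

/-- `qp` only depends on `A` through indices `1..k`. -/
lemma qp_congrA (α β A A' B : ℕ → ℂ) (z : ℂ) (k : ℕ)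
    (h : ∀ j, 1 ≤ j → j ≤ k → A j = A' j) :
    qp α β A B z k = qp α β A' B z k := by
  induction k with
  | zero => rfl
  | succ m ih =>
    have hm : qp α β A B z m = qp α β A' B z m := ih (fun j h1 h2 => h j h1 (by omega))
    simp only [qp, hm, h (m+1) (by omega) le_rfl]

/-- Core determinant identity (free parameters). -/
lemma core (n : ℕ) (hn : 1 ≤ n) (α β A B r : ℕ → ℂ)
    (hr : ∀ k, 1 ≤ k → k + 1 ≤ n → A k * B k + r k ^ 2 = 1) (z : ℂ) :
    (Matrix.diagonal (fun i : Fin n => z - α i) -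
      (Matrix.diagonal fun i : Fin n => 1 - β i * z) *
        ((Matrix.of fun i j : Fin n => coE A B r i j) *
          (Matrix.of fun i j : Fin n => ceE A B r i j))).det
      = (qp α β A B z n).1 := by
  by_cases hodd : n % 2 = 1
  · exact core_aux n hn α β A B r hr (fun h => absurd h (by omega)) z
  · by_cases hA : A n ≠ 0
    · exact core_aux n hn α β A B r hr (fun _ => hA) z
    · push_neg at hA
      have hnev : n % 2 = 0 := by omega
      obtain ⟨m, hm⟩ : ∃ m, n = m + 1 := ⟨n - 1, by omega⟩
      set Dst := Matrix.diagonal (fun i : Fin n => z - α i) with hDst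
      set Dm := Matrix.diagonal (fun i : Fin n => 1 - β i * z) with hDm
      set L := (Matrix.of fun i j : Fin n => coE A B r i j) with hL
      set M := (Matrix.of fun i j : Fin n => ceE A B r i j) with hM
      set lst : Fin n := ⟨n - 1, by omega⟩ with hlst
      have hLt : ∀ t : ℂ, (Matrix.of fun i j : Fin n => coE (Function.update A n t) B r i j)
          = L := by
        intro t
        ext i j
        simp only [Matrix.of_apply, hL]
        unfold coE
        split_ifs with h1 h2
        · rw [Function.update_of_ne (show (i:ℕ)+1 ≠ n by have := i.isLt; omega)]
        all_goals rfl
      have hMt : ∀ t : ℂ, ∀ k j : Fin n, ¬((k:ℕ) = (j:ℕ) ∧ (j:ℕ) = n - 1) →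
          ceE (Function.update A n t) B r k j = ceE A B r k j := by
        intro t k j hj
        have hkn := k.isLt
        unfold ceE
        split_ifs with h1 h2 h3
        · rfl
        · rw [Function.update_of_ne (show (k:ℕ)+1 ≠ n by omega)]
        all_goals rfl
      have hMlast : ∀ t : ℂ, ∀ k : Fin n,
          ceE (Function.update A n t) B r k lst
            = ceE A B r k lst + (if k = lst then -t else 0) := by
        intro t k
        have hlv : (lst : ℕ) = n - 1 := rfl
        by_cases hk : k = lst
        · subst hk
          rw [if_pos rfl]
          have hkodd : (lst : ℕ) % 2 = 1 := by rw [hlv]; omega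
          rw [ceE_diag_odd _ B r hkodd, ceE_diag_odd A B r hkodd]
          have hkn : (lst : ℕ) + 1 = n := by rw [hlv]; omega
          rw [hkn, Function.update_self, hA]
          ring
        · rw [if_neg hk, add_zero]
          exact hMt t k lst (fun hc => hk (Fin.ext hc.1))
      -- the matrix as a column update
      have hTt : ∀ t : ℂ,
          Dst - Dm * (L * Matrix.of fun i j : Fin n => ceE (Function.update A n t) B r i j)
            = (Dst - Dm * (L * M)).updateCol lst
                (fun i : Fin n => (Dst - Dm * (L * M)) i lst + t * ((1 - β (i:ℕ) * z) * L i lst)) := by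
        intro t
        ext i j
        rw [Matrix.updateCol_apply]
        by_cases hj : j = lst
        · rw [if_pos hj, hj]
          have hLM : (L * Matrix.of fun i j : Fin n => ceE (Function.update A n t) B r i j) i lst
              = (L * M) i lst - t * L i lst := by
            rw [Matrix.mul_apply, Matrix.mul_apply]
            have : ∀ k : Fin n, L i k * Matrix.of (fun i j : Fin n => ceE (Function.update A n t) B r i j) k lst
                = L i k * M k lst + (if k = lst then -t * L i k else 0) := by
              intro k
              simp only [Matrix.of_apply, hM]
              rw [hMlast t k]
              by_cases hk : k = lst
              · rw [if_pos hk, if_pos hk]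
                ring
              · rw [if_neg hk, if_neg hk]
                ring
            rw [Finset.sum_congr rfl (fun k _ => this k), Finset.sum_add_distrib,
              Finset.sum_ite_eq' Finset.univ lst (fun k => -t * L i k),
              if_pos (Finset.mem_univ _)]
            ring
          simp only [Matrix.sub_apply, hDm, Matrix.diagonal_mul, hLM]
          ring
        · rw [if_neg hj]
          have hLM : (L * Matrix.of fun i j : Fin n => ceE (Function.update A n t) B r i j) i j
              = (L * M) i j := by
            rw [Matrix.mul_apply, Matrix.mul_apply]
            apply Finset.sum_congr rfl
            intro k _
            simp only [Matrix.of_apply, hM]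
            rw [hMt t k j (fun hc => hj (Fin.ext (by rw [hc.2])))]
          simp only [Matrix.sub_apply, hDm, Matrix.diagonal_mul, hLM]
      -- affine in t
      have haff : ∀ t : ℂ,
          (Dst - Dm * (L * Matrix.of fun i j : Fin n => ceE (Function.update A n t) B r i j)).det
            = (Dst - Dm * (L * M)).det
              + t * ((Dst - Dm * (L * M)).updateCol lst
                  (fun i : Fin n => (1 - β (i:ℕ) * z) * L i lst)).det := by
        intro t
        rw [hTt t]
        have hcol : (fun i : Fin n => (Dst - Dm * (L * M)) i lst + t * ((1 - β (i:ℕ) * z) * L i lst))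
            = (fun i : Fin n => (Dst - Dm * (L * M)) i lst)
              + t • (fun i : Fin n => (1 - β (i:ℕ) * z) * L i lst) := by
          funext i
          simp [smul_eq_mul]
        rw [hcol, Matrix.det_updateCol_add, Matrix.det_updateCol_smul,
          Matrix.updateCol_eq_self]
      -- q side
      have hq : ∀ t : ℂ, (qp α β (Function.update A n t) B z n).1
          = (z - α m) * (qp α β A B z m).1 + t * ((1 - β m * z) * (qp α β A B z m).2) := by
        intro t
        subst hm
        have hcg' : qp α β (Function.update A (m+1) t) B z m = qp α β A B z m :=
          qp_congrA α β _ A B z m (fun j h1 h2 => Function.update_of_ne (by omega) _ _)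
        simp only [qp, hcg', Function.update_self]
        ring
      have hr' : ∀ t : ℂ, ∀ k, 1 ≤ k → k + 1 ≤ n →
          (Function.update A n t) k * B k + r k ^ 2 = 1 := by
        intro t k h1 h2
        rw [Function.update_of_ne (by omega)]
        exact hr k h1 h2
      have e1 := core_aux n hn α β (Function.update A n 1) B r (hr' 1)
        (fun _ => by rw [Function.update_self]; exact one_ne_zero) z
      have e2 := core_aux n hn α β (Function.update A n 2) B r (hr' 2)
        (fun _ => by rw [Function.update_self]; exact two_ne_zero) z
      rw [hLt 1] at e1
      rw [hLt 2] at e2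
      have e1' : (Dst - Dm * (L * Matrix.of fun i j : Fin n =>
          ceE (Function.update A n 1) B r i j)).det
            = (qp α β (Function.update A n 1) B z n).1 := e1
      have e2' : (Dst - Dm * (L * Matrix.of fun i j : Fin n =>
          ceE (Function.update A n 2) B r i j)).det
            = (qp α β (Function.update A n 2) B z n).1 := e2
      rw [haff 1, hq 1] at e1'
      rw [haff 2, hq 2] at e2'
      have hgoal : (qp α β A B z n).1
          = (z - α m) * (qp α β A B z m).1 := by
        subst hm
        simp only [qp]
        rw [show A (m+1) = 0 from hA]
        ring
      rw [hgoal]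
      linear_combination 2 * e1' - e2'

open Polynomial in
/-- polynomial version of the recurrence pair. -/
noncomputable def pqPoly (α a : ℕ → ℂ) : ℕ → Polynomial ℂ × Polynomial ℂ
  | 0 => (1, 1)
  | (k+1) =>
      ((X - C (α k)) * (pqPoly α a k).1
         + C (a (k+1)) * (1 - C ((starRingEnd ℂ) (α k)) * X) * (pqPoly α a k).2,
       C ((starRingEnd ℂ) (a (k+1))) * (X - C (α k)) * (pqPoly α a k).1
         + (1 - C ((starRingEnd ℂ) (α k)) * X) * (pqPoly α a k).2)

open Polynomial

lemma pqPoly_eval (α a : ℕ → ℂ) (z : ℂ) (k : ℕ) :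
    ((pqPoly α a k).1.eval z
        = (qp α (fun i => (starRingEnd ℂ) (α i)) a (fun i => (starRingEnd ℂ) (a i)) z k).1)
      ∧ ((pqPoly α a k).2.eval z
        = (qp α (fun i => (starRingEnd ℂ) (α i)) a (fun i => (starRingEnd ℂ) (a i)) z k).2) := by
  induction k with
  | zero => simp [pqPoly, qp]
  | succ m ih =>
    simp only [pqPoly, qp, eval_add, eval_mul, eval_sub, eval_one, eval_X, eval_C, ih.1, ih.2]
    constructor <;> trivial

lemma pqPoly_natDegree (α a : ℕ → ℂ) (k : ℕ) :
    (pqPoly α a k).1.natDegree ≤ k ∧ (pqPoly α a k).2.natDegree ≤ k := by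
  induction k with
  | zero => simp [pqPoly]
  | succ m ih =>
    have hX : (X - C (α m) : Polynomial ℂ).natDegree ≤ 1 := (natDegree_X_sub_C (α m)).le
    have hV : ((1 : Polynomial ℂ) - C ((starRingEnd ℂ) (α m)) * X).natDegree ≤ 1 := by
      refine (natDegree_sub_le _ _).trans ?_
      have h2 : (C ((starRingEnd ℂ) (α m)) * X).natDegree ≤ 1 :=
        natDegree_mul_le.trans (by simp)
      simp only [natDegree_one]
      omega
    have hC1 : (C (a (m+1)) * ((1 : Polynomial ℂ) - C ((starRingEnd ℂ) (α m)) * X)).natDegree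
        ≤ 1 := natDegree_mul_le.trans (by simp only [natDegree_C]; omega)
    have hC2 : ((C ((starRingEnd ℂ) (a (m+1)))) * (X - C (α m))).natDegree ≤ 1 :=
      natDegree_mul_le.trans (by simp only [natDegree_C]; omega)
    constructor
    · refine (natDegree_add_le _ _).trans (max_le ?_ ?_)
      · exact natDegree_mul_le.trans (by omega)
      · exact natDegree_mul_le.trans (by omega)
    · refine (natDegree_add_le _ _).trans (max_le ?_ ?_)
      · exact natDegree_mul_le.trans (by omega)
      · exact natDegree_mul_le.trans (by omega)

lemma pqPoly_coeff (α a : ℕ → ℂ) (k : ℕ) :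
    (pqPoly α a (k+1)).1.coeff (k+1)
        = (pqPoly α a k).1.coeff k
            - a (k+1) * (starRingEnd ℂ) (α k) * (pqPoly α a k).2.coeff k
      ∧ (pqPoly α a (k+1)).2.coeff (k+1)
        = (starRingEnd ℂ) (a (k+1)) * (pqPoly α a k).1.coeff k
            - (starRingEnd ℂ) (α k) * (pqPoly α a k).2.coeff k := by
  have hz1 : (pqPoly α a k).1.coeff (k+1) = 0 :=
    coeff_eq_zero_of_natDegree_lt (by have := (pqPoly_natDegree α a k).1; omega)
  have hz2 : (pqPoly α a k).2.coeff (k+1) = 0 :=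
    coeff_eq_zero_of_natDegree_lt (by have := (pqPoly_natDegree α a k).2; omega)
  constructor
  · have hrw : (pqPoly α a (k+1)).1
        = X * (pqPoly α a k).1 - C (α k) * (pqPoly α a k).1
          + (C (a (k+1)) * (pqPoly α a k).2
            - C (a (k+1) * (starRingEnd ℂ) (α k)) * (X * (pqPoly α a k).2)) := by
      simp only [pqPoly, C_mul]
      ring
    rw [hrw]
    simp only [coeff_add, coeff_sub, coeff_C_mul, coeff_X_mul, hz1, hz2]
    ring
  · have hrw : (pqPoly α a (k+1)).2
        = C ((starRingEnd ℂ) (a (k+1))) * (X * (pqPoly α a k).1)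
          - C ((starRingEnd ℂ) (a (k+1)) * α k) * (pqPoly α a k).1
          + ((pqPoly α a k).2 - C ((starRingEnd ℂ) (α k)) * (X * (pqPoly α a k).2)) := by
      simp only [pqPoly, C_mul]
      ring
    rw [hrw]
    simp only [coeff_add, coeff_sub, coeff_C_mul, coeff_X_mul, hz1, hz2]
    ring

lemma pq_coeff_norm (α a : ℕ → ℂ) (n : ℕ) (hα0 : α 0 = 0)
    (hα : ∀ k, 1 ≤ k → k ≤ n → ‖α k‖ < 1) (ha : ∀ k, 1 ≤ k → k ≤ n → ‖a k‖ < 1) :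
    ∀ k, 1 ≤ k → k ≤ n → Complex.normSq ((pqPoly α a k).2.coeff k)
        < Complex.normSq ((pqPoly α a k).1.coeff k) := by
  have hnsq : ∀ x : ℂ, ‖x‖ < 1 → Complex.normSq x < 1 := by
    intro x hx
    rw [Complex.normSq_eq_norm_sq]
    nlinarith [norm_nonneg x]
  intro k
  induction k using Nat.strong_induction_on with
  | _ k ih =>
    intro hk1 hkn
    match k with
    | 1 =>
      have h0 := pqPoly_coeff α a 0
      have hb : (pqPoly α a 0).1.coeff 0 = 1 := by simp [pqPoly]
      have hb2 : (pqPoly α a 0).2.coeff 0 = 1 := by simp [pqPoly]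
      rw [h0.1, h0.2, hb, hb2, hα0]
      simp only [map_zero, mul_zero, zero_mul, sub_zero, mul_one]
      rw [Complex.normSq_conj]
      simpa using hnsq _ (ha 1 le_rfl hkn)
    | (m+2) =>
      have hih := ih (m+1) (by omega) (by omega) (by omega)
      have hc := pqPoly_coeff α a (m+1)
      set t := (pqPoly α a (m+1)).1.coeff (m+1) with hT
      set s := (pqPoly α a (m+1)).2.coeff (m+1) with hS
      have hid : (pqPoly α a (m+2)).1.coeff (m+2) * (starRingEnd ℂ) ((pqPoly α a (m+2)).1.coeff (m+2))
          - (pqPoly α a (m+2)).2.coeff (m+2) * (starRingEnd ℂ) ((pqPoly α a (m+2)).2.coeff (m+2))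
          = (1 - a (m+2) * (starRingEnd ℂ) (a (m+2)))
            * (t * (starRingEnd ℂ) t
              - (α (m+1) * (starRingEnd ℂ) (α (m+1))) * (s * (starRingEnd ℂ) s)) := by
        rw [hc.1, hc.2]
        simp only [map_sub, _root_.map_mul, Complex.conj_conj]
        ring
      simp only [Complex.mul_conj] at hid
      have hre : Complex.normSq ((pqPoly α a (m+2)).1.coeff (m+2))
          - Complex.normSq ((pqPoly α a (m+2)).2.coeff (m+2))
          = (1 - Complex.normSq (a (m+2)))
            * (Complex.normSq t - Complex.normSq (α (m+1)) * Complex.normSq s) := by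
        exact_mod_cast hid
      have h1 : Complex.normSq (a (m+2)) < 1 := hnsq _ (ha (m+2) (by omega) (by omega))
      have h2 : Complex.normSq (α (m+1)) < 1 := hnsq _ (hα (m+1) (by omega) (by omega))
      have h3 := Complex.normSq_nonneg s
      have h4 := Complex.normSq_nonneg t
      have hin : Complex.normSq (α (m+1)) * Complex.normSq s ≤ Complex.normSq s :=
        mul_le_of_le_one_left h3 h2.le
      have hpos : 0 < (1 - Complex.normSq (a (m+2)))
          * (Complex.normSq t - Complex.normSq (α (m+1)) * Complex.normSq s) :=
        mul_pos (by linarith) (by linarith)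
      linarith [hre, hpos]


open Matrix Polynomial

/-- the CMV truncation is the product of the generic factors. -/
lemma cmvN_eq (a : ℕ → ℂ) (n : ℕ) :
    cmvN a n
      = (Matrix.of fun i j : Fin n =>
            coE a (fun k => (starRingEnd ℂ) (a k)) (fun k => ((rhoS a k : ℝ) : ℂ)) i j)
        * (Matrix.of fun i j : Fin n =>
            ceE a (fun k => (starRingEnd ℂ) (a k)) (fun k => ((rhoS a k : ℝ) : ℂ)) i j) := rfl

/-- `orfNum` is the recurrence pair scaled by the product of the `e_k`. -/
lemma orfNum_eq_qp (α a : ℕ → ℂ) (z : ℂ) (k : ℕ) :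
    (orfNum α a k).1 z
        = (∏ j ∈ Finset.range k, ((eS α a (j+1) : ℝ) : ℂ))
          * (qp α (fun i => (starRingEnd ℂ) (α i)) a (fun i => (starRingEnd ℂ) (a i)) z k).1
      ∧ (orfNum α a k).2 z
        = (∏ j ∈ Finset.range k, ((eS α a (j+1) : ℝ) : ℂ))
          * (qp α (fun i => (starRingEnd ℂ) (α i)) a (fun i => (starRingEnd ℂ) (a i)) z k).2 := by
  induction k with
  | zero => simp [orfNum, qp]
  | succ m ih =>
    simp only [orfNum, qp, pws, pw, ih.1, ih.2, Finset.prod_range_succ]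
    constructor <;> push_cast <;> ring

end AuxDev

/-- the numerator `p_n = π_n φ_n` of the `n`-th orthogonal rational
function is, up to a nonzero constant, `det(D*_n(z) − D_n(z) 𝒞_n)` where
`D*_n(z) = diag(z − α_i)` and `D_n(z) = diag(1 − conj(α_i) z)`; in particular the zeros
of `φ_n` are the eigenvalues of `ζ̃_{𝒜_n}(𝒞_n)`. -/
theorem orf_numerator_eq_det_cmv
    (n : ℕ) (hn : 1 ≤ n) (α a : ℕ → ℂ) (hα0 : α 0 = 0) (ha0 : a 0 = 1)
    (hα : ∀ k, 1 ≤ k → k ≤ n → ‖α k‖ < 1) (ha : ∀ k, 1 ≤ k → k ≤ n → ‖a k‖ < 1) :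
    (∃ c : ℂ, c ≠ 0 ∧ ∀ z : ℂ,
      (orfNum α a n).1 z =
        c * Matrix.det
          ((Matrix.diagonal fun i : Fin n => z - α i) -
            (Matrix.diagonal fun i : Fin n => 1 - (starRingEnd ℂ) (α i) * z) * cmvN a n)) ∧
    spectrum ℂ (zetaTildeMat α (cmvN a n)) = {z : ℂ | (orfNum α a n).1 z = 0} := by
  classical
  set B : ℕ → ℂ := fun k => (starRingEnd ℂ) (a k) with hB
  set β : ℕ → ℂ := fun k => (starRingEnd ℂ) (α k) with hβ
  set r : ℕ → ℂ := fun k => ((rhoS a k : ℝ) : ℂ) with hrdef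
  have hnorm : ∀ x : ℂ, x * (starRingEnd ℂ) x = ((‖x‖^2 : ℝ) : ℂ) := by
    intro x
    rw [Complex.mul_conj]
    norm_cast
    rw [Complex.normSq_eq_norm_sq]
  have hr : ∀ k, 1 ≤ k → k + 1 ≤ n → a k * B k + r k ^ 2 = 1 := by
    intro k h1 h2
    have hak : ‖a k‖ < 1 := ha k h1 (by omega)
    have hsq : (rhoS a k : ℝ)^2 = 1 - ‖a k‖^2 := by
      rw [rhoS, Real.sq_sqrt]
      nlinarith [norm_nonneg (a k)]
    have hrk : (r k)^2 = ((1 - ‖a k‖^2 : ℝ) : ℂ) := by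
      rw [hrdef]
      push_cast [← hsq]
      norm_cast
    rw [hB, hrk, hnorm]
    push_cast
    ring
  have hdetEq : ∀ z : ℂ,
      (Matrix.diagonal (fun i : Fin n => z - α i) -
        (Matrix.diagonal fun i : Fin n => 1 - (starRingEnd ℂ) (α i) * z) * cmvN a n).det
        = (qp α β a B z n).1 := by
    intro z
    rw [cmvN_eq a n]
    exact core n hn α β a B r hr z
  have heta : ∀ i, i ≤ n → 0 < etaS α i := by
    intro i hi
    rcases Nat.eq_zero_or_pos i with h0 | hpos
    · subst h0
      rw [etaS, hα0]
      simp
    · rw [etaS]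
      have := hα i hpos hi
      apply Real.sqrt_pos.mpr
      nlinarith [norm_nonneg (α i)]
  have hrho : ∀ k, 1 ≤ k → k ≤ n → 0 < rhoS a k := by
    intro k h1 h2
    rw [rhoS]
    have := ha k h1 h2
    apply Real.sqrt_pos.mpr
    nlinarith [norm_nonneg (a k)]
  set c : ℂ := ∏ j ∈ Finset.range n, ((eS α a (j+1) : ℝ) : ℂ) with hc
  have hcne : c ≠ 0 := by
    rw [hc]
    apply Finset.prod_ne_zero_iff.mpr
    intro j hj
    rw [Finset.mem_range] at hj
    have hes : 0 < eS α a (j+1) := by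
      rw [eS]
      have h1 : (j + 1) - 1 = j := rfl
      rw [h1]
      exact div_pos (heta (j+1) (by omega))
        (mul_pos (heta j (by omega)) (hrho (j+1) (by omega) (by omega)))
    exact_mod_cast ne_of_gt hes
  have hp1 : ∀ z : ℂ, (orfNum α a n).1 z
      = c * (Matrix.diagonal (fun i : Fin n => z - α i) -
          (Matrix.diagonal fun i : Fin n => 1 - (starRingEnd ℂ) (α i) * z) * cmvN a n).det := by
    intro z
    rw [hdetEq z, (orfNum_eq_qp α a z n).1, hc]
  refine ⟨⟨c, hcne, hp1⟩, ?_⟩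
  -- spectrum part
  set Cm := cmvN a n with hCm
  set G : Matrix (Fin n) (Fin n) ℂ :=
    1 + (Matrix.diagonal fun i : Fin n => (starRingEnd ℂ) (α i)) * Cm with hG
  set Km : Matrix (Fin n) (Fin n) ℂ := Cm + (Matrix.diagonal fun i : Fin n => α i) with hKm
  set H : Matrix (Fin n) (Fin n) ℂ := etaMat α n with hH
  have hstep1 : ∀ z : ℂ, z • G - Km
      = Matrix.diagonal (fun i : Fin n => z - α i) -
          (Matrix.diagonal fun i : Fin n => 1 - (starRingEnd ℂ) (α i) * z) * Cm := by
    intro z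
    ext i j
    simp only [hG, hKm, Matrix.smul_apply, Matrix.add_apply, Matrix.sub_apply,
      Matrix.one_apply, Matrix.diagonal_mul, Matrix.diagonal_apply, smul_eq_mul]
    split_ifs <;> ring
  have hq2 : ∀ z : ℂ, (z • G - Km).det = Polynomial.eval z (pqPoly α a n).1 := by
    intro z
    rw [hstep1 z, hdetEq z, (pqPoly_eval α a z n).1]
  set MX : Matrix (Fin n) (Fin n) (Polynomial ℂ) :=
    Matrix.of fun i j : Fin n => Polynomial.C (G i j) * Polynomial.X - Polynomial.C (Km i j)
    with hMX
  have heval : ∀ z : ℂ, (MX.det).eval z = (z • G - Km).det := by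
    intro z
    have h1 := RingHom.map_det (Polynomial.evalRingHom z) MX
    have h2 : (Polynomial.evalRingHom z).mapMatrix MX = z • G - Km := by
      ext i j
      simp only [RingHom.mapMatrix_apply, Matrix.map_apply, hMX, Matrix.of_apply,
        Polynomial.coe_evalRingHom, Polynomial.eval_sub, Polynomial.eval_mul,
        Polynomial.eval_C, Polynomial.eval_X, Matrix.sub_apply, Matrix.smul_apply, smul_eq_mul]
      ring
    rw [← h2, ← h1]
    rfl
  have hMXdet : MX.det = (pqPoly α a n).1 :=
    Polynomial.funext (fun z => by rw [heval z, hq2 z])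
  have hcoeffG : (MX.det).coeff n = G.det := by
    rw [Matrix.det_apply, Polynomial.finset_sum_coeff, Matrix.det_apply]
    apply Finset.sum_congr rfl
    intro σ _
    rw [Polynomial.coeff_smul]
    congr 1
    have hdeg : ∀ p ∈ Finset.univ, ((fun i : Fin n => MX (σ i) i) p).natDegree ≤ 1 := by
      intro p _
      simp only [hMX, Matrix.of_apply]
      refine (Polynomial.natDegree_sub_le _ _).trans ?_
      have h1 : (Polynomial.C (G (σ p) p) * Polynomial.X).natDegree ≤ 1 :=
        Polynomial.natDegree_mul_le.trans (by simp)
      simp only [Polynomial.natDegree_C]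
      omega
    have hcp := Polynomial.coeff_prod_of_natDegree_le Finset.univ
      (fun i : Fin n => MX (σ i) i) 1 hdeg
    rw [Finset.card_univ, Fintype.card_fin, mul_one] at hcp
    rw [hcp]
    apply Finset.prod_congr rfl
    intro i _
    simp only [hMX, Matrix.of_apply, Polynomial.coeff_sub, Polynomial.coeff_C_mul,
      Polynomial.coeff_X_one, Polynomial.coeff_C]
    norm_num
  have hGne : G.det ≠ 0 := by
    have hlead := pq_coeff_norm α a n hα0 hα ha n hn le_rfl
    rw [← hcoeffG, hMXdet]
    intro hzero
    rw [hzero] at hlead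
    simp only [Complex.normSq_zero] at hlead
    linarith [Complex.normSq_nonneg ((pqPoly α a n).2.coeff n)]
  have hHdet : H.det ≠ 0 := by
    rw [hH, etaMat, Matrix.det_diagonal]
    apply Finset.prod_ne_zero_iff.mpr
    intro i _
    have : 0 < etaS α (i : ℕ) := heta i (by omega)
    exact_mod_cast ne_of_gt this
  have hHinv : H⁻¹ * H = 1 :=
    Matrix.nonsing_inv_mul H (isUnit_iff_ne_zero.mpr hHdet)
  have hGinv : G⁻¹ * G = 1 :=
    Matrix.nonsing_inv_mul G (isUnit_iff_ne_zero.mpr hGne)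
  have hzeta : zetaTildeMat α (cmvN a n) = H⁻¹ * (Km * G⁻¹) * H := by
    rw [zetaTildeMat, hKm, hG, hH, hCm, Matrix.mul_assoc (etaMat α n)⁻¹ _ _]
  ext z
  simp only [Set.mem_setOf_eq, spectrum.mem_iff, hzeta]
  rw [hCm, hzeta]
  have hconj : algebraMap ℂ (Matrix (Fin n) (Fin n) ℂ) z - H⁻¹ * (Km * G⁻¹) * H
      = H⁻¹ * ((algebraMap ℂ (Matrix (Fin n) (Fin n) ℂ) z - Km * G⁻¹) * H) := by
    rw [Matrix.sub_mul, Matrix.mul_sub]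
    congr 1
    · rw [Algebra.algebraMap_eq_smul_one, Matrix.smul_mul, Matrix.one_mul, Matrix.mul_smul,
        hHinv]
    · rw [Matrix.mul_assoc]
  have hdet1 : (algebraMap ℂ (Matrix (Fin n) (Fin n) ℂ) z - H⁻¹ * (Km * G⁻¹) * H).det
      = (algebraMap ℂ (Matrix (Fin n) (Fin n) ℂ) z - Km * G⁻¹).det := by
    rw [hconj, Matrix.det_mul, Matrix.det_mul, Matrix.det_nonsing_inv,
      Ring.inverse_eq_inv']
    field_simp
  have hdet2 : (algebraMap ℂ (Matrix (Fin n) (Fin n) ℂ) z - Km * G⁻¹).det * G.det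
      = (z • G - Km).det := by
    rw [← Matrix.det_mul, Matrix.sub_mul, Matrix.mul_assoc, hGinv, Matrix.mul_one,
      Algebra.algebraMap_eq_smul_one, Matrix.smul_mul, Matrix.one_mul]
  rw [Matrix.isUnit_iff_isUnit_det, isUnit_iff_ne_zero, not_ne_iff, hdet1]
  have hzero_iff : (algebraMap ℂ (Matrix (Fin n) (Fin n) ℂ) z - Km * G⁻¹).det = 0
      ↔ (z • G - Km).det = 0 := by
    constructor
    · intro h
      rw [← hdet2, h, zero_mul]
    · intro h
      rw [← hdet2] at h
      exact (mul_eq_zero.mp h).resolve_right hGne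
  have hq3 : (z • G - Km).det = (qp α β a B z n).1 := by
    rw [hstep1 z]
    exact hdetEq z
  have horf : (orfNum α a n).1 z = c * (qp α β a B z n).1 := by
    rw [hp1 z, hdetEq z]
  rw [hzero_iff, hq3, horf]
  constructor
  · intro h
    rw [h, mul_zero]
  · intro h
    exact (mul_eq_zero.mp h).resolve_left hcne
end
end

section
/- Fix n ≥ 1, parameters α_1, …, α_n ∈ 𝔻 (with α_0 = 0) and a_1, …, a_n ∈ 𝔻, and let φ_n and p_n = π_n φ_n be given by the orthogonal rational function recurrence. Let ℋ_n be the n×n principal submatrix of the Hessenberg matrix ℋ(a). Then there exists a nonzero constant c ∈ ℂ such that p_n(z) = c · det( D*_n(z) − D_n(z) ℋ_n ) for all z ∈ ℂ, where D*_n(z) = diag(z − α_0, …, z − α_{n−1}) and D_n(z) = diag(1 − conj(α_0) z, …, 1 − conj(α_{n−1}) z). In particular, the zeros of φ_n are exactly the eigenvalues of ζ̃_{𝒜_n}(ℋ_n) with 𝒜_n = diag(α_0, …, α_{n−1}). -/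
/-!
Setup for orthogonal rational functions on the unit circle: `ϖ_k(z) = 1 − conj(α_k) z`,
`ϖ*_k(z) = z − α_k`, `η_k = (1 − |α_k|²)^{1/2}`, `ρ_k = (1 − |a_k|²)^{1/2}`,
`e_k = η_k/(η_{k−1} ρ_k)` (conventions `α_0 = 0`, `a_0 = 1`).
-/

noncomputable section

/-- The `n×n` principal submatrix of the Hessenberg matrix `ℋ(a)` (with `a_0 = 1`):
`ℋ_{i,j} = −conj(a_i)(∏_{k=i+1}^{j} ρ_k) a_{j+1}` for `i ≤ j`, `ℋ_{j+1,j} = ρ_{j+1}`,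
and `0` below the subdiagonal. -/
def hessN (a : ℕ → ℂ) (n : ℕ) : Matrix (Fin n) (Fin n) ℂ :=
  Matrix.of fun i j : Fin n =>
    if (i : ℕ) ≤ (j : ℕ) then
      -(starRingEnd ℂ) (a i) *
        (∏ k ∈ Finset.Icc ((i : ℕ) + 1) (j : ℕ), (rhoS a k : ℂ)) * a ((j : ℕ) + 1)
    else if (i : ℕ) = (j : ℕ) + 1 then (rhoS a ((j : ℕ) + 1) : ℂ)
    else 0

namespace ORFDet

variable (α a : ℕ → ℂ) (s t : ℂ)

def Hnat (i j : ℕ) : ℂ :=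
  if i ≤ j then -(starRingEnd ℂ) (a i) * (∏ k ∈ Finset.Icc (i+1) j, (rhoS a k : ℂ)) * a (j+1)
  else if i = j + 1 then ((rhoS a (j+1) : ℝ) : ℂ) else 0

def Ent (i j : ℕ) : ℂ :=
  (t - α i * s) * (if i = j then 1 else 0) - (s - (starRingEnd ℂ) (α i) * t) * Hnat a i j

def Vcol (m i : ℕ) : ℂ :=
  (s - (starRingEnd ℂ) (α i) * t) * (starRingEnd ℂ) (a i) *
    ∏ k ∈ Finset.Icc (i+1) (m-1), (rhoS a k : ℂ)

def Mmat (m : ℕ) : Matrix (Fin m) (Fin m) ℂ := Matrix.of fun i j => Ent α a s t i j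

def Qmat (m : ℕ) : Matrix (Fin m) (Fin m) ℂ :=
  Matrix.of fun i j => if (j:ℕ) = m - 1 then Vcol α a s t m i else Ent α a s t i j

lemma Mexp (m : ℕ) :
    (Mmat α a s t (m+1)).det =
      (t - α m * s) * (Mmat α a s t m).det + a (m+1) * (Qmat α a s t (m+1)).det := by
  have h1 : Mmat α a s t (m+1) =
      (Mmat α a s t (m+1)).updateCol (Fin.last m)
        (((t - α m * s) • (Pi.single (Fin.last m) (1:ℂ) : Fin (m+1) → ℂ)) +
          (a (m+1) • fun i : Fin (m+1) => Vcol α a s t (m+1) i)) := by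
    ext i j
    rcases eq_or_ne j (Fin.last m) with rfl | hj
    · simp only [Matrix.updateCol_self, Pi.add_apply, Pi.smul_apply, smul_eq_mul]
      have hij : (i : ℕ) ≤ m := Nat.lt_succ_iff.mp i.isLt
      have hjv : ((Fin.last m : Fin (m+1)) : ℕ) = m := rfl
      simp only [Mmat, Matrix.of_apply, Ent, Hnat, hjv, hij, if_true, Vcol]
      have : ((m+1) - 1) = m := rfl
      rw [this]
      rcases eq_or_ne (i : ℕ) m with him | him
      · have : i = Fin.last m := Fin.ext him
        subst this
        simp [him]
        ring
      · have : i ≠ Fin.last m := fun h => him (by rw [h]; rfl)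
        simp [him, Pi.single_apply, this]
        ring
    · rw [Matrix.updateCol_ne hj]
  rw [h1, Matrix.det_updateCol_add, Matrix.det_updateCol_smul,
    Matrix.det_updateCol_smul]
  congr 1
  · congr 1
    rw [Matrix.det_succ_column _ (Fin.last m)]
    rw [Finset.sum_eq_single (Fin.last m)]
    · rw [Matrix.updateCol_self]
      simp only [Pi.single_eq_same]
      have hpow : ((-1 : ℂ)) ^ ((Fin.last m : Fin (m+1)) + (Fin.last m : Fin (m+1)) : ℕ) = 1 := by
        have : ((Fin.last m : Fin (m+1)) + (Fin.last m : Fin (m+1)) : ℕ) = 2 * m := by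
          simp [Fin.val_last]; ring
        rw [this, pow_mul]; norm_num
      rw [hpow, one_mul, one_mul]
      congr 1
      ext i j
      have hj : j.castSucc ≠ Fin.last m := (Fin.castSucc_lt_last j).ne
      simp only [Matrix.submatrix_apply, Fin.succAbove_last, Matrix.updateCol_ne hj]
      simp [Mmat, Fin.coe_castSucc]
    · intro i _ hi
      rw [Matrix.updateCol_self]
      simp [Pi.single_apply, hi]
    · intro h; exact absurd (Finset.mem_univ _) h
  · congr 1
    congr 1
    ext i j
    rcases eq_or_ne j (Fin.last m) with rfl | hj
    · rw [Matrix.updateCol_self]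
      simp only [Qmat, Matrix.of_apply]
      have : ((Fin.last m : Fin (m+1)) : ℕ) = (m+1) - 1 := rfl
      rw [if_pos this]
    · rw [Matrix.updateCol_ne hj]
      simp only [Qmat, Matrix.of_apply, Mmat]
      have : (j : ℕ) ≠ (m+1) - 1 := by
        intro h; exact hj (Fin.ext h)
      rw [if_neg this]

end ORFDet

namespace Qexp_proof

lemma Qexp (α a : ℕ → ℂ) (s t : ℂ) (m : ℕ) :
    (ORFDet.Qmat α a s t (m+2)).det =
      (s - (starRingEnd ℂ) (α (m+1)) * t) *
        ((starRingEnd ℂ) (a (m+1)) * (ORFDet.Mmat α a s t (m+1)).det +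
          ((rhoS a (m+1) : ℂ))^2 * (ORFDet.Qmat α a s t (m+1)).det) := by
  classical
  set A := ORFDet.Qmat α a s t (m+2) with hA
  set j₀ : Fin (m+2) := Fin.last (m+1) with hj₀
  set j₁ : Fin (m+2) := ⟨m, by omega⟩ with hj₁
  have hne : j₀ ≠ j₁ := by
    intro h
    have := congrArg Fin.val h
    simp [hj₀, hj₁] at this
  rw [Matrix.det_succ_row A (Fin.last (m+1))]
  have hvanish : ∀ j ∈ Finset.univ, j ∉ ({j₀, j₁} : Finset (Fin (m+2))) →
      (-1 : ℂ) ^ ((Fin.last (m+1) : Fin (m+2)) + j : ℕ) * A (Fin.last (m+1)) j *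
        (A.submatrix (Fin.last (m+1)).succAbove j.succAbove).det = 0 := by
    intro j _ hj
    have hmem : ¬ ((j : ℕ) = m + 1 ∨ (j : ℕ) = m) := by
      intro h
      exact hj (by
        simp only [Finset.mem_insert, Finset.mem_singleton, hj₀, hj₁, Fin.ext_iff,
          Fin.val_last]
        exact h)
    have h1 : (j : ℕ) ≠ m + 1 := fun h => hmem (Or.inl h)
    have h2 : (j : ℕ) ≠ m := fun h => hmem (Or.inr h)
    have hAz : A (Fin.last (m+1)) j = 0 := by
      have hjlt : (j : ℕ) < m + 2 := j.isLt
      simp only [hA, ORFDet.Qmat, Matrix.of_apply]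
      rw [if_neg (by simpa using h1)]
      simp only [ORFDet.Ent, ORFDet.Hnat, Fin.val_last]
      rw [if_neg (by omega : ¬ (m+1 = (j:ℕ))), if_neg (by omega : ¬ (m+1 ≤ (j:ℕ))),
        if_neg (by omega : ¬ (m+1 = (j:ℕ) + 1))]
      ring
    rw [hAz]; ring
  rw [← Finset.sum_subset (Finset.subset_univ ({j₀, j₁} : Finset (Fin (m+2)))) hvanish,
    Finset.sum_pair hne]
  -- term j₀
  have hterm0 : (-1 : ℂ) ^ ((Fin.last (m+1) : Fin (m+2)) + j₀ : ℕ) * A (Fin.last (m+1)) j₀ *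
      (A.submatrix (Fin.last (m+1)).succAbove j₀.succAbove).det =
      (s - (starRingEnd ℂ) (α (m+1)) * t) * (starRingEnd ℂ) (a (m+1)) *
        (ORFDet.Mmat α a s t (m+1)).det := by
    have hpow : (-1 : ℂ) ^ ((Fin.last (m+1) : Fin (m+2)) + j₀ : ℕ) = 1 := by
      have : ((Fin.last (m+1) : Fin (m+2)) + j₀ : ℕ) = 2 * (m+1) := by
        simp [hj₀, Fin.val_last]; ring
      rw [this, pow_mul]; norm_num
    have hentry : A (Fin.last (m+1)) j₀ =
        (s - (starRingEnd ℂ) (α (m+1)) * t) * (starRingEnd ℂ) (a (m+1)) := by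
      simp only [hA, ORFDet.Qmat, Matrix.of_apply, hj₀]
      rw [if_pos (by simp [Fin.val_last])]
      simp only [ORFDet.Vcol, Fin.val_last]
      rw [Finset.Icc_eq_empty (by omega), Finset.prod_empty, mul_one]
    have hminor : A.submatrix (Fin.last (m+1)).succAbove j₀.succAbove =
        ORFDet.Mmat α a s t (m+1) := by
      ext i j
      have hj : (j.castSucc : ℕ) ≠ (m+2) - 1 := by
        have := j.isLt; simp [Fin.coe_castSucc]; omega
      simp only [Matrix.submatrix_apply, hj₀, Fin.succAbove_last, hA, ORFDet.Qmat,
        Matrix.of_apply]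
      rw [if_neg hj]
      simp [ORFDet.Mmat, ORFDet.Ent, Fin.coe_castSucc]
    rw [hpow, hentry, hminor, one_mul]
  -- term j₁
  have hterm1 : (-1 : ℂ) ^ ((Fin.last (m+1) : Fin (m+2)) + j₁ : ℕ) * A (Fin.last (m+1)) j₁ *
      (A.submatrix (Fin.last (m+1)).succAbove j₁.succAbove).det =
      (s - (starRingEnd ℂ) (α (m+1)) * t) * ((rhoS a (m+1) : ℂ))^2 *
        (ORFDet.Qmat α a s t (m+1)).det := by
    have hpow : (-1 : ℂ) ^ ((Fin.last (m+1) : Fin (m+2)) + j₁ : ℕ) = -1 := by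
      have : ((Fin.last (m+1) : Fin (m+2)) + j₁ : ℕ) = 2 * m + 1 := by
        simp [hj₁, Fin.val_last]; ring
      rw [this]
      exact Odd.neg_one_pow ⟨m, by ring⟩
    have hentry : A (Fin.last (m+1)) j₁ =
        -((s - (starRingEnd ℂ) (α (m+1)) * t) * (rhoS a (m+1) : ℂ)) := by
      have hj₁v : ((j₁ : Fin (m+2)) : ℕ) = m := rfl
      simp only [hA, ORFDet.Qmat, Matrix.of_apply]
      rw [if_neg (by omega : ¬ ((j₁ : Fin (m+2)) : ℕ) = m + 2 - 1)]
      simp only [ORFDet.Ent, ORFDet.Hnat, Fin.val_last, hj₁v]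
      norm_num
    have hminor : A.submatrix (Fin.last (m+1)).succAbove j₁.succAbove =
        (ORFDet.Qmat α a s t (m+1)).updateCol (Fin.last m)
          (((rhoS a (m+1) : ℂ)) • fun i : Fin (m+1) => ORFDet.Vcol α a s t (m+1) (i : ℕ)) := by
      ext k l
      simp only [Matrix.submatrix_apply, Fin.succAbove_last]
      rcases eq_or_ne l (Fin.last m) with rfl | hl
      · rw [Matrix.updateCol_self]
        have hsa : (j₁.succAbove (Fin.last m) : ℕ) = m + 1 := by
          have : ¬ ((Fin.last m).castSucc < j₁) := by
            simp [Fin.lt_def, hj₁, Fin.coe_castSucc, Fin.val_last]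
          rw [Fin.succAbove_of_le_castSucc _ _ (not_lt.mp this)]
          simp [Fin.val_succ, Fin.val_last]
        have hc : ((j₁.succAbove (Fin.last m)) : ℕ) = m + 2 - 1 := by rw [hsa]; omega
        simp only [hA, ORFDet.Qmat, Matrix.of_apply]
        rw [if_pos hc]
        simp only [ORFDet.Vcol, Pi.smul_apply, smul_eq_mul, Fin.coe_castSucc]
        have hk : (k : ℕ) + 1 ≤ m + 1 := by have := k.isLt; omega
        have h21 : ((m+2) - 1) = m + 1 := rfl
        have h11 : ((m+1) - 1) = m := rfl
        rw [h21, h11, Finset.prod_Icc_succ_top hk]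
        ring
      · rw [Matrix.updateCol_ne hl]
        have hlm : (l : ℕ) < m := by
          have := l.isLt
          have : (l : ℕ) ≠ m := fun h => hl (Fin.ext h)
          omega
        have hsa : (j₁.succAbove l : ℕ) = (l : ℕ) := by
          rw [Fin.succAbove_of_castSucc_lt _ _ (by simp [Fin.lt_def, hj₁, Fin.coe_castSucc]; omega)]
          simp [Fin.coe_castSucc]
        simp only [hA, ORFDet.Qmat, Matrix.of_apply]
        rw [if_neg (by rw [hsa]; omega)]
        rw [if_neg (by simpa using hlm.ne)]
        simp [ORFDet.Ent, hsa, Fin.coe_castSucc]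
    rw [hpow, hentry, hminor, Matrix.det_updateCol_smul]
    have hupd : (ORFDet.Qmat α a s t (m+1)).updateCol (Fin.last m)
        (fun i : Fin (m+1) => ORFDet.Vcol α a s t (m+1) (i : ℕ)) =
        ORFDet.Qmat α a s t (m+1) := by
      ext k l
      rcases eq_or_ne l (Fin.last m) with rfl | hl
      · rw [Matrix.updateCol_self]
        simp only [ORFDet.Qmat, Matrix.of_apply]
        rw [if_pos (by simp [Fin.val_last])]
      · rw [Matrix.updateCol_ne hl]
    rw [hupd]
    ring
  rw [hterm0, hterm1]
  ring

end Qexp_proof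

namespace ORFDet

def eSc (α a : ℕ → ℂ) (k : ℕ) : ℂ := ((eS α a k : ℝ) : ℂ)

def PP (α a : ℕ → ℂ) (s t : ℂ) : ℕ → ℂ × ℂ
  | 0 => (1, 1)
  | m + 1 =>
    (eSc α a (m+1) * ((t - α m * s) * (PP α a s t m).1 +
        a (m+1) * (s - (starRingEnd ℂ) (α m) * t) * (PP α a s t m).2),
     eSc α a (m+1) * ((starRingEnd ℂ) (a (m+1)) * (t - α m * s) * (PP α a s t m).1 +
        (s - (starRingEnd ℂ) (α m) * t) * (PP α a s t m).2))

def Eprod (α a : ℕ → ℂ) (m : ℕ) : ℂ := ∏ k ∈ Finset.Icc 1 m, eSc α a k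

lemma main (α a : ℕ → ℂ) (s t : ℂ) (ha0 : a 0 = 1) :
    ∀ m : ℕ, (∀ k, 1 ≤ k → k ≤ m → ((rhoS a k : ℂ))^2 = 1 - (starRingEnd ℂ) (a k) * a k) →
      Eprod α a m * (Mmat α a s t m).det = (PP α a s t m).1 ∧
      Eprod α a m * (Qmat α a s t (m+1)).det =
        (s - (starRingEnd ℂ) (α m) * t) * (PP α a s t m).2 := by
  intro m
  induction m with
  | zero =>
    intro _
    have hE : Eprod α a 0 = 1 := by
      simp [Eprod, Finset.Icc_eq_empty (by omega : ¬ (1:ℕ) ≤ 0)]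
    constructor
    · rw [hE, Matrix.det_fin_zero]; simp [PP]
    · rw [hE, Matrix.det_fin_one]
      have : (Qmat α a s t 1) 0 0 = Vcol α a s t 1 0 := by
        simp [Qmat]
      rw [this]
      simp [PP, Vcol, ha0, Finset.Icc_eq_empty (by omega : ¬ (1:ℕ) ≤ 0)]
  | succ m ih =>
    intro hconj
    obtain ⟨hM, hQ⟩ := ih (fun k hk1 hk2 => hconj k hk1 (by omega))
    have hE : Eprod α a (m+1) = Eprod α a m * eSc α a (m+1) :=
      Finset.prod_Icc_succ_top (by omega) _
    have hMexp := Mexp α a s t m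
    have hM1 : Eprod α a (m+1) * (Mmat α a s t (m+1)).det = (PP α a s t (m+1)).1 := by
      rw [hE, hMexp]
      show _ = eSc α a (m+1) * ((t - α m * s) * (PP α a s t m).1 +
        a (m+1) * (s - (starRingEnd ℂ) (α m) * t) * (PP α a s t m).2)
      linear_combination (eSc α a (m+1) * (t - α m * s)) * hM +
        (eSc α a (m+1) * a (m+1)) * hQ
    refine ⟨hM1, ?_⟩
    have hQexp := Qexp_proof.Qexp α a s t m
    have hrho := hconj (m+1) (by omega) (by omega)
    rw [hE, hQexp]
    show _ = (s - (starRingEnd ℂ) (α (m+1)) * t) *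
      (eSc α a (m+1) * ((starRingEnd ℂ) (a (m+1)) * (t - α m * s) * (PP α a s t m).1 +
        (s - (starRingEnd ℂ) (α m) * t) * (PP α a s t m).2))
    linear_combination
      (Eprod α a m * eSc α a (m+1) * (s - (starRingEnd ℂ) (α (m+1)) * t) *
        (starRingEnd ℂ) (a (m+1))) * hMexp +
      (eSc α a (m+1) * (s - (starRingEnd ℂ) (α (m+1)) * t) * (starRingEnd ℂ) (a (m+1)) *
        (t - α m * s)) * hM +
      (Eprod α a m * eSc α a (m+1) * (s - (starRingEnd ℂ) (α (m+1)) * t) *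
        (Qmat α a s t (m+1)).det) * hrho +
      (eSc α a (m+1) * (s - (starRingEnd ℂ) (α (m+1)) * t)) * hQ

end ORFDet

namespace ORFDet

lemma keyIneq (x y c : ℂ) (h : ‖y‖ < ‖x‖) (hc : ‖c‖ < 1) :
    ‖(starRingEnd ℂ) c * x + y‖ < ‖x + c * y‖ := by
  have h1 : ∀ z : ℂ, Complex.normSq z = ‖z‖^2 := fun z => by
    rw [Complex.normSq_eq_norm_sq]
  have hsq : Complex.normSq (x + c*y) - Complex.normSq ((starRingEnd ℂ) c * x + y)
      = (1 - Complex.normSq c) * (Complex.normSq x - Complex.normSq y) := by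
    simp only [Complex.normSq_apply, Complex.mul_re, Complex.mul_im, Complex.add_re,
      Complex.add_im, Complex.conj_re, Complex.conj_im]
    ring
  have hlt : ‖(starRingEnd ℂ) c * x + y‖^2 < ‖x + c*y‖^2 := by
    have hc2 : Complex.normSq c < 1 := by rw [h1]; nlinarith [norm_nonneg c]
    have hxy : Complex.normSq y < Complex.normSq x := by
      rw [h1, h1]; nlinarith [norm_nonneg y, norm_nonneg x]
    nlinarith [hsq, h1 (x + c*y), h1 ((starRingEnd ℂ) c * x + y)]
  exact lt_of_pow_lt_pow_left₀ 2 (norm_nonneg _) hlt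

lemma normInd (α a : ℕ → ℂ) (n : ℕ) (hα0 : α 0 = 0)
    (hα : ∀ k, 1 ≤ k → k ≤ n → ‖α k‖ < 1) (ha : ∀ k, 1 ≤ k → k ≤ n → ‖a k‖ < 1)
    (he : ∀ k, 1 ≤ k → k ≤ n → eSc α a k ≠ 0) :
    ∀ m, m ≤ n → ‖(starRingEnd ℂ) (α m) * (PP α a 0 1 m).2‖ < ‖(PP α a 0 1 m).1‖ := by
  intro m
  induction m with
  | zero => intro _; simp [PP, hα0]
  | succ m ih =>
    intro hmn
    have ihm := ih (by omega)
    have hkey : ‖(starRingEnd ℂ) (a (m+1)) * (PP α a 0 1 m).1 +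
          (-((starRingEnd ℂ) (α m) * (PP α a 0 1 m).2))‖ <
        ‖(PP α a 0 1 m).1 + a (m+1) * (-((starRingEnd ℂ) (α m) * (PP α a 0 1 m).2))‖ :=
      keyIneq _ _ _ (by simpa using ihm) (ha (m+1) (by omega) hmn)
    have hP1 : (PP α a 0 1 (m+1)).1 = eSc α a (m+1) *
        ((PP α a 0 1 m).1 + a (m+1) * (-((starRingEnd ℂ) (α m) * (PP α a 0 1 m).2))) := by
      show eSc α a (m+1) * ((1 - α m * 0) * (PP α a 0 1 m).1 +
        a (m+1) * (0 - (starRingEnd ℂ) (α m) * 1) * (PP α a 0 1 m).2) = _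
      ring
    have hP2 : (PP α a 0 1 (m+1)).2 = eSc α a (m+1) *
        ((starRingEnd ℂ) (a (m+1)) * (PP α a 0 1 m).1 +
          (-((starRingEnd ℂ) (α m) * (PP α a 0 1 m).2))) := by
      show eSc α a (m+1) * ((starRingEnd ℂ) (a (m+1)) * (1 - α m * 0) * (PP α a 0 1 m).1 +
        (0 - (starRingEnd ℂ) (α m) * 1) * (PP α a 0 1 m).2) = _
      ring
    rw [hP1, hP2]
    have hepos : 0 < ‖eSc α a (m+1)‖ :=
      norm_pos_iff.mpr (he (m+1) (by omega) hmn)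
    calc ‖(starRingEnd ℂ) (α (m+1)) * (eSc α a (m+1) * _)‖
        = ‖α (m+1)‖ * (‖eSc α a (m+1)‖ * ‖(starRingEnd ℂ) (a (m+1)) * (PP α a 0 1 m).1 +
            (-((starRingEnd ℂ) (α m) * (PP α a 0 1 m).2))‖) := by
          rw [norm_mul, norm_mul, RCLike.norm_conj]
      _ ≤ 1 * (‖eSc α a (m+1)‖ * ‖(starRingEnd ℂ) (a (m+1)) * (PP α a 0 1 m).1 +
            (-((starRingEnd ℂ) (α m) * (PP α a 0 1 m).2))‖) := by
          apply mul_le_mul_of_nonneg_right ((hα (m+1) (by omega) hmn).le)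
          positivity
      _ < ‖eSc α a (m+1)‖ * ‖(PP α a 0 1 m).1 +
            a (m+1) * (-((starRingEnd ℂ) (α m) * (PP α a 0 1 m).2))‖ := by
          rw [one_mul]
          exact mul_lt_mul_of_pos_left hkey hepos
      _ = ‖eSc α a (m+1) * ((PP α a 0 1 m).1 +
            a (m+1) * (-((starRingEnd ℂ) (α m) * (PP α a 0 1 m).2)))‖ := (norm_mul _ _).symm

end ORFDet

namespace ORFDet

lemma orfNum_eq_PP (α a : ℕ → ℂ) (z : ℂ) :
    ∀ k, (orfNum α a k).1 z = (PP α a 1 z k).1 ∧ (orfNum α a k).2 z = (PP α a 1 z k).2 := by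
  intro k
  induction k with
  | zero => constructor <;> simp [orfNum, PP]
  | succ k ih =>
    obtain ⟨h1, h2⟩ := ih
    constructor
    · show (eS α a (k+1) : ℂ) * (pws α k z * (orfNum α a k).1 z +
          a (k + 1) * pw α k z * (orfNum α a k).2 z) = _
      simp only [PP, eSc, pws, pw, h1, h2]
      ring
    · show (eS α a (k+1) : ℂ) * ((starRingEnd ℂ) (a (k + 1)) * pws α k z * (orfNum α a k).1 z +
          pw α k z * (orfNum α a k).2 z) = _
      simp only [PP, eSc, pws, pw, h1, h2]
      ring

end ORFDet

/-- the numerator `p_n = π_n φ_n` of the `n`-th orthogonal rational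
function is, up to a nonzero constant, `det(D*_n(z) − D_n(z) ℋ_n)`; in particular the
zeros of `φ_n` are the eigenvalues of `ζ̃_{𝒜_n}(ℋ_n)`. -/
theorem orf_numerator_eq_det_hessenberg
    (n : ℕ) (hn : 1 ≤ n) (α a : ℕ → ℂ) (hα0 : α 0 = 0) (ha0 : a 0 = 1)
    (hα : ∀ k, 1 ≤ k → k ≤ n → ‖α k‖ < 1) (ha : ∀ k, 1 ≤ k → k ≤ n → ‖a k‖ < 1) :
    (∃ c : ℂ, c ≠ 0 ∧ ∀ z : ℂ,
      (orfNum α a n).1 z =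
        c * Matrix.det
          ((Matrix.diagonal fun i : Fin n => z - α i) -
            (Matrix.diagonal fun i : Fin n => 1 - (starRingEnd ℂ) (α i) * z) * hessN a n)) ∧
    spectrum ℂ (zetaTildeMat α (hessN a n)) = {z : ℂ | (orfNum α a n).1 z = 0} := by
  classical
  -- positivity facts
  have hαle : ∀ k : ℕ, k ≤ n → ‖α k‖ < 1 := by
    intro k hk
    rcases Nat.eq_zero_or_pos k with rfl | hk1
    · simp [hα0]
    · exact hα k hk1 hk
  have hetaPos : ∀ k : ℕ, k ≤ n → 0 < etaS α k := by
    intro k hk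
    exact Real.sqrt_pos.mpr (by nlinarith [norm_nonneg (α k), hαle k hk])
  have hrhoPos : ∀ k, 1 ≤ k → k ≤ n → 0 < rhoS a k := by
    intro k h1 h2
    exact Real.sqrt_pos.mpr (by nlinarith [norm_nonneg (a k), ha k h1 h2])
  have hePos : ∀ k, 1 ≤ k → k ≤ n → 0 < eS α a k := by
    intro k h1 h2
    exact div_pos (hetaPos k h2) (mul_pos (hetaPos (k-1) (by omega)) (hrhoPos k h1 h2))
  have heNe : ∀ k, 1 ≤ k → k ≤ n → ORFDet.eSc α a k ≠ 0 := fun k h1 h2 =>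
    Complex.ofReal_ne_zero.mpr (hePos k h1 h2).ne'
  have hEprod : ORFDet.Eprod α a n ≠ 0 := by
    rw [ORFDet.Eprod, Finset.prod_ne_zero_iff]
    intro k hk
    rw [Finset.mem_Icc] at hk
    exact heNe k hk.1 hk.2
  have hconj : ∀ k, 1 ≤ k → k ≤ n →
      ((rhoS a k : ℂ))^2 = 1 - (starRingEnd ℂ) (a k) * a k := by
    intro k h1 h2
    have hsq : (rhoS a k)^2 = 1 - ‖a k‖^2 :=
      Real.sq_sqrt (by nlinarith [norm_nonneg (a k), ha k h1 h2])
    have hma : (starRingEnd ℂ) (a k) * a k = ((‖a k‖^2 : ℝ) : ℂ) := by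
      rw [mul_comm, Complex.mul_conj]
      norm_cast
      rw [Complex.normSq_eq_norm_sq]
    rw [hma, ← Complex.ofReal_pow, hsq]
    push_cast
    ring
  -- main determinant identity
  have hMain : ∀ s t : ℂ,
      ORFDet.Eprod α a n * (ORFDet.Mmat α a s t n).det = (ORFDet.PP α a s t n).1 := by
    intro s t
    exact (ORFDet.main α a s t ha0 n hconj).1
  have hHnat : ∀ i j : Fin n, hessN a n i j = ORFDet.Hnat a (i : ℕ) (j : ℕ) := by
    intro i j; rfl
  have hMatId : ∀ z : ℂ, ORFDet.Mmat α a 1 z n =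
      (Matrix.diagonal fun i : Fin n => z - α i) -
        (Matrix.diagonal fun i : Fin n => 1 - (starRingEnd ℂ) (α i) * z) * hessN a n := by
    intro z
    ext i j
    rw [Matrix.sub_apply, Matrix.diagonal_mul, hHnat]
    simp only [ORFDet.Mmat, Matrix.of_apply, ORFDet.Ent, Matrix.diagonal_apply]
    rcases eq_or_ne i j with rfl | hij
    · simp
    · have h2 : (i : ℕ) ≠ (j : ℕ) := fun h => hij (Fin.ext h)
      simp [hij, h2]
  have horf : ∀ z : ℂ, (orfNum α a n).1 z =
      ORFDet.Eprod α a n * (ORFDet.Mmat α a 1 z n).det := fun z =>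
    ((ORFDet.orfNum_eq_PP α a z n).1).trans (hMain 1 z).symm
  constructor
  · refine ⟨ORFDet.Eprod α a n, hEprod, fun z => ?_⟩
    rw [horf z, hMatId z]
  -- spectrum statement
  · set G : Matrix (Fin n) (Fin n) ℂ :=
      1 + (Matrix.diagonal fun i : Fin n => (starRingEnd ℂ) (α i)) * hessN a n with hGdef
    have hGM : ORFDet.Mmat α a 0 1 n = G := by
      ext i j
      rw [hGdef, Matrix.add_apply, Matrix.diagonal_mul, hHnat]
      simp only [ORFDet.Mmat, Matrix.of_apply, ORFDet.Ent, Matrix.one_apply]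
      rcases eq_or_ne i j with rfl | hij
      · simp
      · have h2 : (i : ℕ) ≠ (j : ℕ) := fun h => hij (Fin.ext h)
        simp [hij, h2]
    have hdetGne : G.det ≠ 0 := by
      rw [← hGM]
      intro h0
      have hmain0 := hMain 0 1
      rw [h0, mul_zero] at hmain0
      have hni := ORFDet.normInd α a n hα0 hα ha heNe n le_rfl
      rw [← hmain0, norm_zero] at hni
      exact (norm_nonneg _).not_gt hni
    have hGunit : IsUnit G.det := isUnit_iff_ne_zero.mpr hdetGne
    have hηdet : (etaMat α n).det ≠ 0 := by
      rw [etaMat, Matrix.det_diagonal, Finset.prod_ne_zero_iff]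
      intro i _
      exact Complex.ofReal_ne_zero.mpr (hetaPos (i : ℕ) (Nat.le_of_lt i.isLt)).ne'
    have hηunit : IsUnit (etaMat α n).det := isUnit_iff_ne_zero.mpr hηdet
    have hzG : ∀ z : ℂ, ORFDet.Mmat α a 1 z n =
        z • G - (hessN a n + Matrix.diagonal fun i : Fin n => α i) := by
      intro z
      ext i j
      rw [Matrix.sub_apply, Matrix.smul_apply, hGdef, Matrix.add_apply, Matrix.add_apply,
        Matrix.diagonal_mul, Matrix.one_apply, hHnat, Matrix.diagonal_apply]
      simp only [ORFDet.Mmat, Matrix.of_apply, ORFDet.Ent, smul_eq_mul]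
      rcases eq_or_ne i j with rfl | hij
      · simp
        ring
      · have h2 : (i : ℕ) ≠ (j : ℕ) := fun h => hij (Fin.ext h)
        simp [hij, h2]
        ring
    have hkey : ∀ z : ℂ, algebraMap ℂ (Matrix (Fin n) (Fin n) ℂ) z -
        zetaTildeMat α (hessN a n)
        = (etaMat α n)⁻¹ * ((ORFDet.Mmat α a 1 z n) * G⁻¹) * etaMat α n := by
      intro z
      rw [hzG z, Matrix.sub_mul, smul_mul_assoc, Matrix.mul_nonsing_inv _ hGunit,
        Matrix.mul_sub, Matrix.sub_mul]
      congr 1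
      · rw [mul_smul_comm, mul_one, smul_mul_assoc, Matrix.nonsing_inv_mul _ hηunit,
          Algebra.algebraMap_eq_smul_one]
      · rw [zetaTildeMat, ← hGdef, Matrix.mul_assoc (etaMat α n)⁻¹]
    have hdetEq : ∀ z : ℂ, (algebraMap ℂ (Matrix (Fin n) (Fin n) ℂ) z -
        zetaTildeMat α (hessN a n)).det = (ORFDet.Mmat α a 1 z n).det * (G.det)⁻¹ := by
      intro z
      rw [hkey z, Matrix.det_mul, Matrix.det_mul, Matrix.det_mul, Matrix.det_nonsing_inv,
        Matrix.det_nonsing_inv, Ring.inverse_eq_inv']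
      field_simp
    ext z
    simp only [Set.mem_setOf_eq]
    rw [spectrum.mem_iff, Matrix.isUnit_iff_isUnit_det, isUnit_iff_ne_zero, not_ne_iff,
      hdetEq z, horf z]
    constructor
    · intro h
      rcases mul_eq_zero.mp h with h | h
      · rw [h, mul_zero]
      · exact absurd h (inv_ne_zero hdetGne)
    · intro h
      rcases mul_eq_zero.mp h with h | h
      · exact absurd h hEprod
      · rw [h, zero_mul]
end
end
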